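/- arXiv:1606.00542 — 3 statements merged into one kernel-verified Lean document; each statement's English description precedes it below -/
import Mathlib

section
/- Let $\lambda$ be a partition of $n$, $(\alpha|\beta)$ a bicomposition of $n$, and $(\tilde\alpha|\tilde\beta)$ obtained by rearranging the parts of $\alpha$ and of $\beta$. Then $|\mathscr{T}_{\mathrm{sstd}}(\lambda,(\tilde\alpha|\tilde\beta))| = |\mathscr{T}_{\mathrm{sstd}}(\lambda,(\alpha|\beta))|$. -/
namespace SignedYoung
open Equiv Finset
open scoped Classical

abbrev Sym (n : ℕ) := Equiv.Perm (Fin n)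

/-- Index of the block of the composition `γ` containing position `i` (0-based). -/
def blockOf (γ : List ℕ) (i : ℕ) : ℕ :=
  (List.range γ.length).countP (fun j => decide ((γ.take (j + 1)).sum ≤ i))

/-- The Young subgroup of `Sym n` associated to the composition `γ`. -/
def youngSubgroup (n : ℕ) (γ : List ℕ) : Subgroup (Sym n) where
  carrier := {σ | ∀ i : Fin n, blockOf γ (σ i) = blockOf γ i}
  one_mem' := by intro i; simp
  mul_mem' := by
    intro a b ha hb i
    simp only [Equiv.Perm.mul_apply]
    rw [ha, hb]
  inv_mem' := by
    intro a ha i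
    have h := ha (a⁻¹ i)
    rw [show a (a⁻¹ i) = i from a.apply_symm_apply i] at h
    exact h.symm

/-- The subgroup `Sym_α` of the Young subgroup `Sym_{α|β}`: block-preserving permutations
fixing all points `≥ |α|`. -/
def symA (n : ℕ) (α β : List ℕ) : Set (Sym n) :=
  {σ | σ ∈ youngSubgroup n (α ++ β) ∧ ∀ i : Fin n, α.sum ≤ (i : ℕ) → σ i = i}

/-- The subgroup `Sym_β^{+|α|}`: block-preserving permutations fixing all points `< |α|`. -/
def symB (n : ℕ) (α β : List ℕ) : Set (Sym n) :=
  {σ | σ ∈ youngSubgroup n (α ++ β) ∧ ∀ i : Fin n, (i : ℕ) < α.sum → σ i = i}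

/-- Cells of the Young diagram of the composition `lam`. -/
abbrev Cell (lam : List ℕ) := (i : Fin lam.length) × Fin (lam.get i)

/-- A `lam`-tableau: a bijective labelling of the cells by `1, …, n` (here `Fin n`). -/
abbrev Tab (n : ℕ) (lam : List ℕ) := Cell lam ≃ Fin n

/-- The row stabilizer of a tableau. -/
def rowStab {n : ℕ} {lam : List ℕ} (t : Tab n lam) : Set (Sym n) :=
  {σ | ∀ a : Fin n, (t.symm (σ a)).1 = (t.symm a).1}

/-- The column stabilizer of a tableau. -/
def colStab {n : ℕ} {lam : List ℕ} (t : Tab n lam) : Set (Sym n) :=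
  {σ | ∀ a : Fin n, ((t.symm (σ a)).2 : ℕ) = ((t.symm a).2 : ℕ)}

/-- Colours `c_1 < c_2 < ⋯ < d_1 < d_2 < ⋯` (0-based). -/
abbrev Colour := Lex (ℕ ⊕ ℕ)

def cCol (k : ℕ) : Colour := toLex (Sum.inl k)

def dCol (k : ℕ) : Colour := toLex (Sum.inr k)

/-- `T` is a `lam`-tableau of type `(α|β)`: exactly `α_k` cells of colour `c_k` and
`β_k` of colour `d_k`. -/
def HasType {lam : List ℕ} (α β : List ℕ) (T : Cell lam → Colour) : Prop :=
  (∀ k : ℕ, (Finset.univ.filter fun c => T c = cCol k).card = α.getD k 0) ∧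
  (∀ k : ℕ, (Finset.univ.filter fun c => T c = dCol k).card = β.getD k 0)

/-- The colour of the number `i` under the canonical colouring by `(α|β)`. -/
def colourOfIdx (α β : List ℕ) (i : ℕ) : Colour :=
  if blockOf (α ++ β) i < α.length then cCol (blockOf (α ++ β) i)
  else dCol (blockOf (α ++ β) i - α.length)

/-- The canonical `lam`-tableau of type `(α|β)` associated to the tableau `t0`. -/
def canonT {n : ℕ} {lam : List ℕ} (t0 : Tab n lam) (α β : List ℕ) : Cell lam → Colour :=
  fun c => colourOfIdx α β (t0 c)

/-- The action `σ · T = T ∘ t0⁻¹ ∘ σ⁻¹ ∘ t0` of `Sym n` on tableaux of type `(α|β)`,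
through the fixed tableau `t0`. -/
def actT {n : ℕ} {lam : List ℕ} (t0 : Tab n lam) (σ : Sym n) (T : Cell lam → Colour) :
    Cell lam → Colour :=
  fun c => T (t0.symm (σ⁻¹ (t0 c)))

/-- `T_d = d · T_0`. -/
def TOf {n : ℕ} {lam : List ℕ} (t0 : Tab n lam) (α β : List ℕ) (d : Sym n) :
    Cell lam → Colour :=
  actT t0 d (canonT t0 α β)

def RowSemistd {lam : List ℕ} (T : Cell lam → Colour) : Prop :=
  ∀ c c' : Cell lam, c.1 = c'.1 → (c.2 : ℕ) < (c'.2 : ℕ) → T c ≤ T c'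

def ColSemistd {lam : List ℕ} (T : Cell lam → Colour) : Prop :=
  ∀ c c' : Cell lam, (c.2 : ℕ) = (c'.2 : ℕ) → c.1 < c'.1 → T c ≤ T c'

/-- Repeats in a row occur only for colours `c_k`. -/
def RowRepeatC {lam : List ℕ} (T : Cell lam → Colour) : Prop :=
  ∀ c c' : Cell lam, c.1 = c'.1 → (c.2 : ℕ) ≠ (c'.2 : ℕ) → T c = T c' → ∃ k, T c = cCol k

/-- Repeats in a column occur only for colours `d_k`. -/
def ColRepeatD {lam : List ℕ} (T : Cell lam → Colour) : Prop :=
  ∀ c c' : Cell lam, (c.2 : ℕ) = (c'.2 : ℕ) → c.1 ≠ c'.1 → T c = T c' → ∃ k, T c = dCol k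

def IsSemistd {lam : List ℕ} (T : Cell lam → Colour) : Prop :=
  RowSemistd T ∧ ColSemistd T ∧ RowRepeatC T ∧ ColRepeatD T

/-- A standard tableau: strictly increasing along rows and down columns. -/
def IsStd {n : ℕ} {lam : List ℕ} (t : Tab n lam) : Prop :=
  (∀ c c' : Cell lam, c.1 = c'.1 → (c.2 : ℕ) < (c'.2 : ℕ) → t c < t c') ∧
  (∀ c c' : Cell lam, (c.2 : ℕ) = (c'.2 : ℕ) → c.1 < c'.1 → t c < t c')

def IsPartition (n : ℕ) (lam : List ℕ) : Prop :=
  lam.Pairwise (· ≥ ·) ∧ (∀ x ∈ lam, 0 < x) ∧ lam.sum = n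

def IsBicomp (n : ℕ) (α β : List ℕ) : Prop :=
  (∀ x ∈ α, 0 < x) ∧ (∀ x ∈ β, 0 < x) ∧ α.sum + β.sum = n

/-- `𝒮 = {d : d⁻¹ R_{t0} d ∩ Sym_{α|β} ⊆ Sym_α}`. -/
def RSet {n : ℕ} {lam : List ℕ} (t0 : Tab n lam) (α β : List ℕ) : Set (Sym n) :=
  {d | ∀ σ ∈ rowStab t0, d⁻¹ * σ * d ∈ youngSubgroup n (α ++ β) →
    d⁻¹ * σ * d ∈ symA n α β}

/-- `𝒞 = {d : d⁻¹ C_{t0} d ∩ Sym_{α|β} ⊆ Sym_β^{+|α|}}`. -/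
def CSet {n : ℕ} {lam : List ℕ} (t0 : Tab n lam) (α β : List ℕ) : Set (Sym n) :=
  {d | ∀ σ ∈ colStab t0, d⁻¹ * σ * d ∈ youngSubgroup n (α ++ β) →
    d⁻¹ * σ * d ∈ symB n α β}

/-- The double coset `R_{t0} x Sym_{α|β}`. -/
def dCoset {n : ℕ} {lam : List ℕ} (t0 : Tab n lam) (α β : List ℕ) (x : Sym n) :
    Set (Sym n) :=
  {ω | ∃ τ ∈ rowStab t0, ∃ ξ ∈ youngSubgroup n (α ++ β), ω = τ * x * ξ}

/-- The double coset `C_{t0} x Sym_{α|β}`. -/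
def cCoset {n : ℕ} {lam : List ℕ} (t0 : Tab n lam) (α β : List ℕ) (x : Sym n) :
    Set (Sym n) :=
  {ω | ∃ σ ∈ colStab t0, ∃ ξ ∈ youngSubgroup n (α ++ β), ω = σ * x * ξ}

/-- `ε` is the sign function `ε_𝔡` on the double coset `R_{t0} 𝔡 Sym_{α|β}`:
`ε(τ 𝔡 ξ_α ξ_β^{+|α|}) = sgn ξ_β`. -/
def IsEps {n : ℕ} {lam : List ℕ} (t0 : Tab n lam) (α β : List ℕ) (𝔡 : Sym n)
    (ε : Sym n → ℤ) : Prop :=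
  ∀ τ ∈ rowStab t0, ∀ ξa ∈ symA n α β, ∀ ξb ∈ symB n α β,
    ε (τ * 𝔡 * (ξa * ξb)) = (Equiv.Perm.sign ξb : ℤ)

/-- The coefficient `𝔞_{d,𝔡} = ∑_{σ ∈ C_{t0}, σd ∈ R_{t0} 𝔡 Sym_{α|β}} sgn(σ) ε_𝔡(σ d)`. -/
noncomputable def coeffA {n : ℕ} {lam : List ℕ} (t0 : Tab n lam) (α β : List ℕ)
    (ε : Sym n → ℤ) (d 𝔡 : Sym n) : ℤ :=
  ∑ σ : Sym n, if σ ∈ colStab t0 ∧ σ * d ∈ dCoset t0 α β 𝔡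
    then (Equiv.Perm.sign σ : ℤ) * ε (σ * d) else 0

/-- The multiset of colours in column `j` of `T`. -/
def colMul {lam : List ℕ} (T : Cell lam → Colour) (j : ℕ) : Multiset Colour :=
  (Finset.univ.filter fun c : Cell lam => (c.2 : ℕ) = j).val.map T

noncomputable def sortedCol (m : Multiset Colour) : List Colour := m.sort (· ≤ ·)

/-- Comparison of column multisets: the sorted lists agree up to position `k`, where
the first is larger. -/
def msGT (m m' : Multiset Colour) : Prop :=
  ∃ k, (∀ s, s < k → (sortedCol m).getD s (cCol 0) = (sortedCol m').getD s (cCol 0)) ∧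
    (sortedCol m').getD k (cCol 0) < (sortedCol m).getD k (cCol 0)

/-- The strict column-dominance order `T ⊳ T'`. -/
def TabGT {lam : List ℕ} (T T' : Cell lam → Colour) : Prop :=
  ∃ t, (∀ j, j < t → colMul T j = colMul T' j) ∧ msGT (colMul T t) (colMul T' t)

/-- The column-dominance pre-order `T ⊵ T'`. -/
def TabGE {lam : List ℕ} (T T' : Cell lam → Colour) : Prop :=
  (∀ j, colMul T j = colMul T' j) ∨ TabGT T T'



/-! ### Auxiliary machinery: Bender–Knuth involutions -/

section Aux

variable {mu : List ℕ}

/-- Length of row `i` (0 if out of range). -/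
def rlen (mu : List ℕ) (i : ℕ) : ℕ := mu.getD i 0

lemma lt_length_of_rlen {i j : ℕ} (h : j < rlen mu i) : i < mu.length := by
  by_contra hc
  rw [rlen, List.getD_eq_default _ _ (not_lt.1 hc)] at h
  omega

lemma rlen_eq_get {i : ℕ} (h : i < mu.length) : rlen mu i = mu.get ⟨i, h⟩ := by
  rw [rlen, List.getD_eq_getElem _ _ h, List.get_eq_getElem]

/-- Build a cell from coordinates. -/
def mkCell (mu : List ℕ) {i j : ℕ} (h : j < rlen mu i) : Cell mu :=
  ⟨⟨i, lt_length_of_rlen h⟩, ⟨j, by rw [← rlen_eq_get (lt_length_of_rlen h)]; exact h⟩⟩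

lemma cell_rlen (c : Cell mu) : (c.2 : ℕ) < rlen mu c.1.1 := by
  rw [rlen_eq_get c.1.2]
  exact c.2.2

lemma mkCell_eq {c : Cell mu} (h : (c.2 : ℕ) < rlen mu c.1.1) : mkCell mu h = c := by
  rcases c with ⟨⟨i, hi⟩, ⟨j, hj⟩⟩
  rfl

lemma cell_ext {c c' : Cell mu} (h1 : c.1.1 = c'.1.1) (h2 : (c.2 : ℕ) = (c'.2 : ℕ)) :
    c = c' := by
  rcases c with ⟨⟨i, hi⟩, ⟨j, hj⟩⟩
  rcases c' with ⟨⟨i', hi'⟩, ⟨j', hj'⟩⟩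
  have h1' : i = i' := h1
  subst h1'
  have h2' : j = j' := h2
  subst h2'
  rfl

/-- The extended tableau function, with value `⊤` outside the diagram. -/
noncomputable def extT (mu : List ℕ) (T : Cell mu → Colour) (i j : ℕ) : WithTop Colour :=
  if h : j < rlen mu i then (T (mkCell mu h) : WithTop Colour) else ⊤

lemma extT_cell (T : Cell mu → Colour) (c : Cell mu) :
    extT mu T c.1.1 c.2.1 = (T c : WithTop Colour) := by
  rw [extT, dif_pos (cell_rlen c), mkCell_eq]

lemma extT_eq_top (T : Cell mu → Colour) {i j : ℕ} (h : ¬ j < rlen mu i) :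
    extT mu T i j = ⊤ := dif_neg h

lemma ext_eq_coe {T : Cell mu → Colour} {i j : ℕ} {x : Colour}
    (h : extT mu T i j = (x : WithTop Colour)) :
    ∃ hc : j < rlen mu i, T (mkCell mu hc) = x := by
  by_cases hc : j < rlen mu i
  · refine ⟨hc, ?_⟩
    rw [extT, dif_pos hc] at h
    exact_mod_cast h
  · rw [extT_eq_top T hc] at h
    exact absurd h (by simp)

/-- Generalized semistandardness: row repeats must satisfy `P`, column repeats `¬P`. -/
def GS (P : Colour → Prop) {mu : List ℕ} (T : Cell mu → Colour) : Prop :=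
  RowSemistd T ∧ ColSemistd T ∧
    (∀ c c' : Cell mu, c.1 = c'.1 → (c.2 : ℕ) ≠ (c'.2 : ℕ) → T c = T c' → P (T c)) ∧
    (∀ c c' : Cell mu, (c.2 : ℕ) = (c'.2 : ℕ) → c.1 ≠ c'.1 → T c = T c' → ¬ P (T c))

/-- Bundled context for the Bender–Knuth argument. -/
structure Ctx (mu : List ℕ) (P : Colour → Prop) (a b : Colour) (T : Cell mu → Colour) :
    Prop where
  hs : ∀ ⦃i i' : ℕ⦄, i ≤ i' → rlen mu i' ≤ rlen mu i
  gs : GS P T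
  hab : a < b
  hadj : ∀ x : Colour, a < x → b ≤ x
  hPa : P a
  hPb : P b

variable {P : Colour → Prop} {a b : Colour} {T : Cell mu → Colour}

/-! #### Order helpers in `WithTop Colour` -/

lemma wt_lt_b_le_a (hadj : ∀ x : Colour, a < x → b ≤ x) {v : WithTop Colour}
    (h : v < (b : WithTop Colour)) : v ≤ (a : WithTop Colour) := by
  induction v using WithTop.recTopCoe with
  | top => exact absurd h (by simp)
  | coe z =>
    rw [WithTop.coe_lt_coe] at h
    rw [WithTop.coe_le_coe]
    by_contra hc
    exact absurd (hadj z (not_le.1 hc)) (not_le.2 h)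

lemma wt_lt_of_notab (hab : a < b) (hadj : ∀ x : Colour, a < x → b ≤ x) {v : WithTop Colour}
    (h1 : (a : WithTop Colour) ≤ v) (h2 : v ≠ (a : WithTop Colour))
    (h3 : v ≠ (b : WithTop Colour)) : (b : WithTop Colour) < v := by
  induction v using WithTop.recTopCoe with
  | top => exact WithTop.coe_lt_top b
  | coe z =>
    rw [WithTop.coe_lt_coe]
    rw [WithTop.coe_le_coe] at h1
    have hza : a < z := lt_of_le_of_ne h1 (fun h => h2 (by rw [h]))
    exact lt_of_le_of_ne (hadj z hza) (fun h => h3 (by rw [h]))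

lemma wt_eq_b_of (hadj : ∀ x : Colour, a < x → b ≤ x) {v : WithTop Colour}
    (h1 : ¬ v ≤ (a : WithTop Colour)) (h2 : v ≤ (b : WithTop Colour)) :
    v = (b : WithTop Colour) := by
  rcases lt_or_eq_of_le h2 with h | h
  · exact absurd (wt_lt_b_le_a hadj h) h1
  · exact h

/-! #### Basic monotonicity of `extT` -/

lemma ext_row_mono (H : Ctx mu P a b T) {i j j' : ℕ} (h : j ≤ j') :
    extT mu T i j ≤ extT mu T i j' := by
  by_cases h' : j' < rlen mu i
  · have hj : j < rlen mu i := lt_of_le_of_lt h h'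
    rw [extT, dif_pos hj, extT, dif_pos h']
    rcases eq_or_lt_of_le h with rfl | hlt
    · exact le_refl _
    · exact WithTop.coe_le_coe.2 (H.gs.1 _ _ rfl hlt)
  · rw [extT_eq_top T h']
    exact le_top

lemma ext_col_mono (H : Ctx mu P a b T) {i i' j : ℕ} (h : i ≤ i') :
    extT mu T i j ≤ extT mu T i' j := by
  by_cases h' : j < rlen mu i'
  · have hj : j < rlen mu i := lt_of_lt_of_le h' (H.hs h)
    rw [extT, dif_pos hj, extT, dif_pos h']
    rcases eq_or_lt_of_le h with rfl | hlt
    · exact le_refl _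
    · refine WithTop.coe_le_coe.2 (H.gs.2.1 _ _ rfl ?_)
      exact Fin.mk_lt_mk.2 hlt
  · rw [extT_eq_top T h']
    exact le_top

lemma ext_col_rep (H : Ctx mu P a b T) {i i' j : ℕ} (h : i < i') {x : Colour}
    (h1 : extT mu T i j = (x : WithTop Colour)) (h2 : extT mu T i' j = (x : WithTop Colour)) :
    ¬ P x := by
  obtain ⟨hc1, he1⟩ := ext_eq_coe h1
  obtain ⟨hc2, he2⟩ := ext_eq_coe h2
  have := H.gs.2.2.2 (mkCell mu hc1) (mkCell mu hc2) rfl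
    (by simp only [mkCell]; exact fun hh => absurd (Fin.mk.inj_iff.1 hh) (Nat.ne_of_lt h))
    (by rw [he1, he2])
  rw [he1] at this
  exact this

lemma ext_row_rep (H : Ctx mu P a b T) {i j j' : ℕ} (h : j ≠ j') {x : Colour}
    (h1 : extT mu T i j = (x : WithTop Colour)) (h2 : extT mu T i j' = (x : WithTop Colour)) :
    P x := by
  obtain ⟨hc1, he1⟩ := ext_eq_coe h1
  obtain ⟨hc2, he2⟩ := ext_eq_coe h2
  have := H.gs.2.2.1 (mkCell mu hc1) (mkCell mu hc2) rfl h (by rw [he1, he2])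
  rw [he1] at this
  exact this

lemma ext_below_a (H : Ctx mu P a b T) {i j : ℕ} (h : extT mu T i j = (a : WithTop Colour)) :
    (b : WithTop Colour) ≤ extT mu T (i + 1) j := by
  by_cases htop : extT mu T (i + 1) j = ⊤
  · rw [htop]; exact le_top
  · obtain ⟨z, hz⟩ := WithTop.ne_top_iff_exists.1 htop
    rw [← hz]
    have hm : extT mu T i j ≤ extT mu T (i + 1) j := ext_col_mono H (Nat.le_succ i)
    rw [h, ← hz, WithTop.coe_le_coe] at hm
    have hne : z ≠ a := fun hzz =>
      (ext_col_rep H (Nat.lt_succ_self i) h (by rw [← hz, hzz])) H.hPa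
    exact WithTop.coe_le_coe.2 (H.hadj z (lt_of_le_of_ne hm (fun hh => hne hh.symm)))

lemma ext_above_b (H : Ctx mu P a b T) {i j : ℕ}
    (h : extT mu T (i + 1) j = (b : WithTop Colour)) :
    extT mu T i j ≤ (a : WithTop Colour) := by
  have hle : extT mu T i j ≤ (b : WithTop Colour) := by
    rw [← h]; exact ext_col_mono H (Nat.le_succ i)
  rcases lt_or_eq_of_le hle with hlt | heq
  · exact wt_lt_b_le_a H.hadj hlt
  · exact absurd ((ext_col_rep H (Nat.lt_succ_self i) heq h)) (fun hc => hc H.hPb)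

/-! #### Down-closed subsets of a row -/

lemma downClosed_eq_range {S : Finset ℕ} (h : ∀ x ∈ S, ∀ y, y ≤ x → y ∈ S) :
    S = Finset.range S.card := by
  rcases S.eq_empty_or_nonempty with rfl | hne
  · simp
  · have hmax := S.max'_mem hne
    have h1 : S = Finset.range (S.max' hne + 1) := by
      apply Finset.Subset.antisymm
      · intro x hx
        simp only [Finset.mem_range, Nat.lt_succ_iff]
        exact S.le_max' x hx
      · intro x hx
        simp only [Finset.mem_range, Nat.lt_succ_iff] at hx
        exact h _ hmax _ hx
    have h2 : S.card = S.max' hne + 1 := by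
      have h3 := congrArg Finset.card h1
      rwa [Finset.card_range] at h3
    rw [h2]
    exact h1

lemma downClosed_mem {L : ℕ} {Q : ℕ → Prop}
    (h : ∀ x y, y ≤ x → x < L → Q x → Q y) {j : ℕ} (hj : j < L) :
    Q j ↔ j < ((Finset.range L).filter Q).card := by
  classical
  set S := (Finset.range L).filter Q with hS
  have hd : ∀ x ∈ S, ∀ y, y ≤ x → y ∈ S := by
    intro x hx y hy
    rw [hS, Finset.mem_filter, Finset.mem_range] at hx ⊢
    exact ⟨lt_of_le_of_lt hy hx.1, h x y hy hx.1 hx.2⟩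
  have hr := downClosed_eq_range hd
  constructor
  · intro hQ
    have : j ∈ S := by rw [hS, Finset.mem_filter, Finset.mem_range]; exact ⟨hj, hQ⟩
    rw [hr, Finset.mem_range] at this
    exact this
  · intro hlt
    have : j ∈ S := by rw [hr, Finset.mem_range]; exact hlt
    rw [hS, Finset.mem_filter] at this
    exact this.2

/-! #### The row predicates -/

def q1 (mu : List ℕ) (T : Cell mu → Colour) (a : Colour) (i j : ℕ) : Prop :=
  extT mu T i j < (a : WithTop Colour)

def prA (mu : List ℕ) (T : Cell mu → Colour) (a b : Colour) (i j : ℕ) : Prop :=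
  extT mu T i j = (a : WithTop Colour) ∧ extT mu T (i + 1) j = (b : WithTop Colour)

def q2 (mu : List ℕ) (T : Cell mu → Colour) (a b : Colour) (i j : ℕ) : Prop :=
  q1 mu T a i j ∨ prA mu T a b i j

def q3 (mu : List ℕ) (T : Cell mu → Colour) (a : Colour) (i j : ℕ) : Prop :=
  extT mu T i j ≤ (a : WithTop Colour)

def prB (mu : List ℕ) (T : Cell mu → Colour) (a b : Colour) (i j : ℕ) : Prop :=
  extT mu T i j = (b : WithTop Colour) ∧ ∃ i', i = i' + 1 ∧ extT mu T i' j = (a : WithTop Colour)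

def frA (mu : List ℕ) (T : Cell mu → Colour) (a b : Colour) (i j : ℕ) : Prop :=
  extT mu T i j = (a : WithTop Colour) ∧ ¬ prA mu T a b i j

def frB (mu : List ℕ) (T : Cell mu → Colour) (a b : Colour) (i j : ℕ) : Prop :=
  extT mu T i j = (b : WithTop Colour) ∧ ¬ prB mu T a b i j

def q4 (mu : List ℕ) (T : Cell mu → Colour) (a b : Colour) (i j : ℕ) : Prop :=
  q3 mu T a i j ∨ frB mu T a b i j

def q5 (mu : List ℕ) (T : Cell mu → Colour) (b : Colour) (i j : ℕ) : Prop :=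
  extT mu T i j ≤ (b : WithTop Colour)

noncomputable def nC (mu : List ℕ) (Q : ℕ → ℕ → Prop) (i : ℕ) : ℕ :=
  ((Finset.range (rlen mu i)).filter (Q i)).card

noncomputable def n1 (mu : List ℕ) (T : Cell mu → Colour) (a : Colour) : ℕ → ℕ :=
  nC mu (q1 mu T a)
noncomputable def n2 (mu : List ℕ) (T : Cell mu → Colour) (a b : Colour) : ℕ → ℕ :=
  nC mu (q2 mu T a b)
noncomputable def n3 (mu : List ℕ) (T : Cell mu → Colour) (a : Colour) : ℕ → ℕ :=
  nC mu (q3 mu T a)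
noncomputable def n4 (mu : List ℕ) (T : Cell mu → Colour) (a b : Colour) : ℕ → ℕ :=
  nC mu (q4 mu T a b)
noncomputable def n5 (mu : List ℕ) (T : Cell mu → Colour) (b : Colour) : ℕ → ℕ :=
  nC mu (q5 mu T b)
noncomputable def nprA (mu : List ℕ) (T : Cell mu → Colour) (a b : Colour) : ℕ → ℕ :=
  nC mu (prA mu T a b)
noncomputable def nprB (mu : List ℕ) (T : Cell mu → Colour) (a b : Colour) : ℕ → ℕ :=
  nC mu (prB mu T a b)
noncomputable def nfrA (mu : List ℕ) (T : Cell mu → Colour) (a b : Colour) : ℕ → ℕ :=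
  nC mu (frA mu T a b)
noncomputable def nfrB (mu : List ℕ) (T : Cell mu → Colour) (a b : Colour) : ℕ → ℕ :=
  nC mu (frB mu T a b)

/-- The Bender–Knuth threshold of row `i`. -/
noncomputable def thr (mu : List ℕ) (T : Cell mu → Colour) (a b : Colour) (i : ℕ) : ℕ :=
  n2 mu T a b i + nfrB mu T a b i

/-- The Bender–Knuth involution. -/
noncomputable def bk (mu : List ℕ) (a b : Colour) (T : Cell mu → Colour) :
    Cell mu → Colour := fun c =>
  if T c = a ∨ T c = b then (if (c.2 : ℕ) < thr mu T a b c.1.1 then a else b) else T c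

/-! #### Iff reformulations of the predicates -/

lemma prA_iff (hab : a < b) {i j : ℕ} : prA mu T a b i j ↔ q2 mu T a b i j ∧ ¬ q1 mu T a i j := by
  constructor
  · intro h
    refine ⟨Or.inr h, ?_⟩
    rw [q1, h.1]
    exact lt_irrefl _
  · rintro ⟨h2, h1⟩
    rcases h2 with h | h
    · exact absurd h h1
    · exact h

lemma eqa_iff {i j : ℕ} :
    extT mu T i j = (a : WithTop Colour) ↔ q3 mu T a i j ∧ ¬ q1 mu T a i j := by
  constructor
  · intro h
    exact ⟨le_of_eq h, by rw [q1, h]; exact lt_irrefl _⟩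
  · rintro ⟨h3, h1⟩
    exact le_antisymm h3 (not_lt.1 h1)

lemma eqb_iff (hab : a < b) (hadj : ∀ x : Colour, a < x → b ≤ x) {i j : ℕ} :
    extT mu T i j = (b : WithTop Colour) ↔ q5 mu T b i j ∧ ¬ q3 mu T a i j := by
  constructor
  · intro h
    refine ⟨le_of_eq h, ?_⟩
    rw [q3, h]
    simp only [WithTop.coe_le_coe]
    exact not_le.2 hab
  · rintro ⟨h5, h3⟩
    exact wt_eq_b_of hadj h3 h5

lemma frA_iff (hab : a < b) {i j : ℕ} :
    frA mu T a b i j ↔ q3 mu T a i j ∧ ¬ q2 mu T a b i j := by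
  constructor
  · rintro ⟨ha, hn⟩
    refine ⟨le_of_eq ha, ?_⟩
    rintro (h | h)
    · rw [q1, ha] at h; exact absurd h (lt_irrefl _)
    · exact hn h
  · rintro ⟨h3, h2⟩
    have h1 : ¬ q1 mu T a i j := fun h => h2 (Or.inl h)
    exact ⟨eqa_iff.2 ⟨h3, h1⟩, fun h => h2 (Or.inr h)⟩

lemma frB_iff (hab : a < b) {i j : ℕ} :
    frB mu T a b i j ↔ q4 mu T a b i j ∧ ¬ q3 mu T a i j := by
  constructor
  · rintro ⟨hb, hn⟩
    refine ⟨Or.inr ⟨hb, hn⟩, ?_⟩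
    rw [q3, hb]
    simp only [WithTop.coe_le_coe]
    exact not_le.2 hab
  · rintro ⟨h4, h3⟩
    rcases h4 with h | h
    · exact absurd h h3
    · exact h

lemma prB_iff (hab : a < b) (hadj : ∀ x : Colour, a < x → b ≤ x) {i j : ℕ} :
    prB mu T a b i j ↔ q5 mu T b i j ∧ ¬ q4 mu T a b i j := by
  constructor
  · intro h
    refine ⟨le_of_eq h.1, ?_⟩
    rintro (h3 | hf)
    · rw [q3, h.1] at h3
      simp only [WithTop.coe_le_coe] at h3
      exact absurd h3 (not_le.2 hab)
    · exact hf.2 h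
  · rintro ⟨h5, h4⟩
    have h3 : ¬ q3 mu T a i j := fun h => h4 (Or.inl h)
    have hb : extT mu T i j = (b : WithTop Colour) := wt_eq_b_of hadj h3 h5
    by_contra hc
    exact h4 (Or.inr ⟨hb, hc⟩)

lemma q5_iff_q4_or_prB (hab : a < b) (hadj : ∀ x : Colour, a < x → b ≤ x) {i j : ℕ} :
    q5 mu T b i j ↔ q4 mu T a b i j ∨ prB mu T a b i j := by
  constructor
  · intro h5
    by_cases h4 : q4 mu T a b i j
    · exact Or.inl h4
    · exact Or.inr ((prB_iff hab hadj).2 ⟨h5, h4⟩)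
  · rintro (h | h)
    · rcases h with h | h
      · exact le_trans h (WithTop.coe_le_coe.2 hab.le)
      · exact le_of_eq h.1
    · exact le_of_eq h.1

lemma q3_iff_q2_or_frA (hab : a < b) {i j : ℕ} :
    q3 mu T a i j ↔ q2 mu T a b i j ∨ frA mu T a b i j := by
  constructor
  · intro h3
    by_cases h2 : q2 mu T a b i j
    · exact Or.inl h2
    · exact Or.inr ((frA_iff hab).2 ⟨h3, h2⟩)
  · rintro (h | h)
    · rcases h with h | h
      · exact le_of_lt h
      · exact le_of_eq h.1
    · exact le_of_eq h.1

/-! #### Down-closedness of the predicates along a row -/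

lemma dc1 (H : Ctx mu P a b T) (i : ℕ) :
    ∀ x y, y ≤ x → x < rlen mu i → q1 mu T a i x → q1 mu T a i y := by
  intro x y hyx _ hx
  exact lt_of_le_of_lt (ext_row_mono H hyx) hx

lemma dc2 (H : Ctx mu P a b T) (i : ℕ) :
    ∀ x y, y ≤ x → x < rlen mu i → q2 mu T a b i x → q2 mu T a b i y := by
  intro x y hyx hxr hx
  rcases hx with hx | hx
  · exact Or.inl (lt_of_le_of_lt (ext_row_mono H hyx) hx)
  · have hle : extT mu T i y ≤ (a : WithTop Colour) := by
      rw [← hx.1]; exact ext_row_mono H hyx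
    rcases lt_or_eq_of_le hle with hlt | heq
    · exact Or.inl hlt
    · refine Or.inr ⟨heq, le_antisymm ?_ ?_⟩
      · rw [← hx.2]; exact ext_row_mono H hyx
      · exact ext_below_a H heq
  
lemma dc3 (H : Ctx mu P a b T) (i : ℕ) :
    ∀ x y, y ≤ x → x < rlen mu i → q3 mu T a i x → q3 mu T a i y := by
  intro x y hyx _ hx
  exact le_trans (ext_row_mono H hyx) hx

lemma dc4 (H : Ctx mu P a b T) (i : ℕ) :
    ∀ x y, y ≤ x → x < rlen mu i → q4 mu T a b i x → q4 mu T a b i y := by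
  intro x y hyx hxr hx
  rcases hx with hx | hx
  · exact Or.inl (le_trans (ext_row_mono H hyx) hx)
  · have hle : extT mu T i y ≤ (b : WithTop Colour) := by
      rw [← hx.1]; exact ext_row_mono H hyx
    rcases lt_or_eq_of_le hle with hlt | heq
    · exact Or.inl (wt_lt_b_le_a H.hadj hlt)
    · refine Or.inr ⟨heq, ?_⟩
      rintro ⟨_, i', rfl, hia⟩
      refine hx.2 ⟨hx.1, i', rfl, le_antisymm (ext_above_b H hx.1) ?_⟩
      rw [← hia]
      exact ext_row_mono H hyx

lemma dc5 (H : Ctx mu P a b T) (i : ℕ) :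
    ∀ x y, y ≤ x → x < rlen mu i → q5 mu T b i x → q5 mu T b i y := by
  intro x y hyx _ hx
  exact le_trans (ext_row_mono H hyx) hx

/-! #### Positional characterizations -/

lemma ch1 (H : Ctx mu P a b T) {i j : ℕ} (hj : j < rlen mu i) :
    q1 mu T a i j ↔ j < n1 mu T a i := downClosed_mem (dc1 H i) hj

lemma ch2 (H : Ctx mu P a b T) {i j : ℕ} (hj : j < rlen mu i) :
    q2 mu T a b i j ↔ j < n2 mu T a b i := downClosed_mem (dc2 H i) hj

lemma ch3 (H : Ctx mu P a b T) {i j : ℕ} (hj : j < rlen mu i) :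
    q3 mu T a i j ↔ j < n3 mu T a i := downClosed_mem (dc3 H i) hj

lemma ch4 (H : Ctx mu P a b T) {i j : ℕ} (hj : j < rlen mu i) :
    q4 mu T a b i j ↔ j < n4 mu T a b i := downClosed_mem (dc4 H i) hj

lemma ch5 (H : Ctx mu P a b T) {i j : ℕ} (hj : j < rlen mu i) :
    q5 mu T b i j ↔ j < n5 mu T b i := downClosed_mem (dc5 H i) hj

lemma chA (H : Ctx mu P a b T) {i j : ℕ} (hj : j < rlen mu i) :
    extT mu T i j = (a : WithTop Colour) ↔ n1 mu T a i ≤ j ∧ j < n3 mu T a i := by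
  rw [eqa_iff, ch3 H hj, ch1 H hj]
  omega

lemma chB (H : Ctx mu P a b T) {i j : ℕ} (hj : j < rlen mu i) :
    extT mu T i j = (b : WithTop Colour) ↔ n3 mu T a i ≤ j ∧ j < n5 mu T b i := by
  rw [eqb_iff H.hab H.hadj, ch5 H hj, ch3 H hj]
  omega

lemma chPrA (H : Ctx mu P a b T) {i j : ℕ} (hj : j < rlen mu i) :
    prA mu T a b i j ↔ n1 mu T a i ≤ j ∧ j < n2 mu T a b i := by
  rw [prA_iff H.hab, ch2 H hj, ch1 H hj]
  omega

lemma chPrB (H : Ctx mu P a b T) {i j : ℕ} (hj : j < rlen mu i) :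
    prB mu T a b i j ↔ n4 mu T a b i ≤ j ∧ j < n5 mu T b i := by
  rw [prB_iff H.hab H.hadj, ch5 H hj, ch4 H hj]
  omega

lemma chFrB (H : Ctx mu P a b T) {i j : ℕ} (hj : j < rlen mu i) :
    frB mu T a b i j ↔ n3 mu T a i ≤ j ∧ j < n4 mu T a b i := by
  rw [frB_iff H.hab, ch4 H hj, ch3 H hj]
  omega

lemma chZone (H : Ctx mu P a b T) {i j : ℕ} (hj : j < rlen mu i) :
    (extT mu T i j = (a : WithTop Colour) ∨ extT mu T i j = (b : WithTop Colour)) ↔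
      n1 mu T a i ≤ j ∧ j < n5 mu T b i := by
  rw [chA H hj, chB H hj]
  have h13 : n1 mu T a i ≤ n3 mu T a i := by
    unfold n1 n3 nC
    apply Finset.card_le_card
    intro x hx
    rw [Finset.mem_filter] at hx ⊢
    exact ⟨hx.1, le_of_lt hx.2⟩
  have h35 : n3 mu T a i ≤ n5 mu T b i := by
    unfold n3 n5 nC
    apply Finset.card_le_card
    intro x hx
    rw [Finset.mem_filter] at hx ⊢
    exact ⟨hx.1, le_trans hx.2 (WithTop.coe_le_coe.2 H.hab.le)⟩
  omega

/-! #### Counting identities within a row -/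

lemma card_filter_interval (L x y : ℕ) (hy : y ≤ L) :
    ((Finset.range L).filter (fun j => x ≤ j ∧ j < y)).card = y - x := by
  have h : (Finset.range L).filter (fun j => x ≤ j ∧ j < y) = Finset.Ico x y := by
    ext j
    simp only [Finset.mem_filter, Finset.mem_range, Finset.mem_Ico]
    omega
  rw [h, Nat.card_Ico]

lemma nC_split {Q R S : ℕ → ℕ → Prop} (hiff : ∀ i j, j < rlen mu i → (Q i j ↔ R i j ∨ S i j))
    (hdisj : ∀ i j, R i j → S i j → False) (i : ℕ) :
    nC mu Q i = nC mu R i + nC mu S i := by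
  classical
  rw [nC, nC, nC]
  have h1 : (Finset.range (rlen mu i)).filter (Q i)
      = (Finset.range (rlen mu i)).filter (R i) ∪ (Finset.range (rlen mu i)).filter (S i) := by
    ext j
    simp only [Finset.mem_filter, Finset.mem_union, Finset.mem_range]
    constructor
    · rintro ⟨hj, hq⟩
      rcases (hiff i j hj).1 hq with h | h
      · exact Or.inl ⟨hj, h⟩
      · exact Or.inr ⟨hj, h⟩
    · rintro (⟨hj, h⟩ | ⟨hj, h⟩)
      · exact ⟨hj, (hiff i j hj).2 (Or.inl h)⟩
      · exact ⟨hj, (hiff i j hj).2 (Or.inr h)⟩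
  rw [h1, Finset.card_union_of_disjoint]
  exact Finset.disjoint_left.2 fun j hj1 hj2 =>
    hdisj i j (Finset.mem_filter.1 hj1).2 (Finset.mem_filter.1 hj2).2

lemma n2_eq (H : Ctx mu P a b T) (i : ℕ) :
    n2 mu T a b i = n1 mu T a i + nprA mu T a b i := by
  apply nC_split (fun i j _ => Iff.rfl)
  intro i j hr hp
  rw [q1, hp.1] at hr
  exact absurd hr (lt_irrefl _)

lemma n3_eq (H : Ctx mu P a b T) (i : ℕ) :
    n3 mu T a i = n2 mu T a b i + nfrA mu T a b i := by
  apply nC_split (fun i j _ => q3_iff_q2_or_frA H.hab)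
  intro i j h2 hf
  exact ((frA_iff H.hab).1 hf).2 h2

lemma n4_eq (H : Ctx mu P a b T) (i : ℕ) :
    n4 mu T a b i = n3 mu T a i + nfrB mu T a b i := by
  apply nC_split (fun i j _ => Iff.rfl)
  intro i j h3 hf
  rw [q3, hf.1] at h3
  exact absurd (WithTop.coe_le_coe.1 h3) (not_le.2 H.hab)

lemma n5_eq (H : Ctx mu P a b T) (i : ℕ) :
    n5 mu T b i = n4 mu T a b i + nprB mu T a b i := by
  apply nC_split (fun i j _ => q5_iff_q4_or_prB H.hab H.hadj)
  intro i j h4 hp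
  exact ((prB_iff H.hab H.hadj).1 hp).2 h4

/-! #### Basic properties of `bk` -/

lemma thr_ge (i : ℕ) : n2 mu T a b i ≤ thr mu T a b i := Nat.le_add_right _ _

lemma thr_le (H : Ctx mu P a b T) (i : ℕ) : thr mu T a b i ≤ n4 mu T a b i := by
  have h4 := n4_eq H i
  have h3 := n3_eq H i
  rw [thr]
  omega

lemma n5_le_rlen (i : ℕ) : n5 mu T b i ≤ rlen mu i := by
  rw [n5, nC]
  exact le_trans (Finset.card_filter_le _ _) (by rw [Finset.card_range])

lemma mkCell_fst (mu : List ℕ) {i j : ℕ} (h : j < rlen mu i) : (mkCell mu h).1.1 = i := rfl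
lemma mkCell_snd (mu : List ℕ) {i j : ℕ} (h : j < rlen mu i) : ((mkCell mu h).2 : ℕ) = j := rfl

lemma extT_bk (i j : ℕ) : extT mu (bk mu a b T) i j =
    if extT mu T i j = (a : WithTop Colour) ∨ extT mu T i j = (b : WithTop Colour)
    then (if j < thr mu T a b i then (a : WithTop Colour) else (b : WithTop Colour))
    else extT mu T i j := by
  by_cases h : j < rlen mu i
  · rw [extT, dif_pos h, extT, dif_pos h]
    simp only [bk, mkCell_fst, mkCell_snd, WithTop.coe_inj,
      apply_ite (fun x : Colour => (x : WithTop Colour))]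
    by_cases hj : j < thr mu T a b i <;> simp [hj]
  · rw [extT_eq_top _ h, extT_eq_top T h]
    simp

lemma extbk_eq_a_iff (H : Ctx mu P a b T) {i j : ℕ} :
    extT mu (bk mu a b T) i j = (a : WithTop Colour) ↔
      n1 mu T a i ≤ j ∧ j < thr mu T a b i := by
  rw [extT_bk]
  constructor
  · intro h
    split_ifs at h with hz ht
    · have hr : j < rlen mu i := by
        rcases hz with hz | hz
        · obtain ⟨hr, _⟩ := ext_eq_coe hz; exact hr
        · obtain ⟨hr, _⟩ := ext_eq_coe hz; exact hr
      exact ⟨((chZone H hr).1 hz).1, ht⟩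
    · exact absurd (WithTop.coe_inj.1 h) (ne_of_gt H.hab)
    · obtain ⟨hr, _⟩ := ext_eq_coe h
      exact absurd (Or.inl h) hz
  · rintro ⟨h1, ht⟩
    have hj : j < rlen mu i := by
      have := thr_le H i
      have := n4_eq H i
      have := n3_eq H i
      have := n2_eq H i
      have h5 := n5_eq (T := T) H i
      have := n5_le_rlen (T := T) (b := b) (mu := mu) i
      omega
    have hz : extT mu T i j = (a : WithTop Colour) ∨ extT mu T i j = (b : WithTop Colour) := by
      rw [chZone H hj]
      have := thr_le H i
      have h4 := n4_eq H i
      have h5 := n5_eq (T := T) H i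
      omega
    rw [if_pos hz, if_pos ht]

lemma extbk_eq_b_iff (H : Ctx mu P a b T) {i j : ℕ} :
    extT mu (bk mu a b T) i j = (b : WithTop Colour) ↔
      thr mu T a b i ≤ j ∧ j < n5 mu T b i := by
  rw [extT_bk]
  constructor
  · intro h
    split_ifs at h with hz ht
    · exact absurd (WithTop.coe_inj.1 h) (ne_of_lt H.hab)
    · have hr : j < rlen mu i := by
        rcases hz with hz | hz
        · obtain ⟨hr, _⟩ := ext_eq_coe hz; exact hr
        · obtain ⟨hr, _⟩ := ext_eq_coe hz; exact hr
      exact ⟨not_lt.1 ht, ((chZone H hr).1 hz).2⟩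
    · exact absurd (Or.inr h) hz
  · rintro ⟨ht, h5⟩
    have hj : j < rlen mu i := lt_of_lt_of_le h5 (n5_le_rlen i)
    have hz : extT mu T i j = (a : WithTop Colour) ∨ extT mu T i j = (b : WithTop Colour) := by
      rw [chZone H hj]
      have := thr_ge (T := T) (a := a) (b := b) (mu := mu) i
      have h2 := n2_eq H i
      omega
    rw [if_pos hz, if_neg (not_lt.2 ht)]

lemma bk_prA (H : Ctx mu P a b T) {i j : ℕ} (h : prA mu T a b i j) :
    extT mu (bk mu a b T) i j = (a : WithTop Colour) := by
  obtain ⟨hr, _⟩ := ext_eq_coe h.1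
  have := (chPrA H hr).1 h
  rw [extbk_eq_a_iff H]
  have := thr_ge (T := T) (a := a) (b := b) (mu := mu) i
  omega

lemma bk_prB (H : Ctx mu P a b T) {i j : ℕ} (h : prB mu T a b i j) :
    extT mu (bk mu a b T) i j = (b : WithTop Colour) := by
  obtain ⟨hr, _⟩ := ext_eq_coe h.1
  have := (chPrB H hr).1 h
  rw [extbk_eq_b_iff H]
  have := thr_le H i
  omega

lemma bk_zone_iff (H : Ctx mu P a b T) {i j : ℕ} :
    (extT mu (bk mu a b T) i j = (a : WithTop Colour) ∨
      extT mu (bk mu a b T) i j = (b : WithTop Colour)) ↔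
    (extT mu T i j = (a : WithTop Colour) ∨ extT mu T i j = (b : WithTop Colour)) := by
  rw [extbk_eq_a_iff H, extbk_eq_b_iff H]
  constructor
  · intro h
    have hj : j < rlen mu i := by
      rcases h with h | h
      · have := thr_le H i
        have h4 := n4_eq H i
        have h5 := n5_eq (T := T) H i
        have := n5_le_rlen (T := T) (b := b) (mu := mu) i
        omega
      · exact lt_of_lt_of_le h.2 (n5_le_rlen i)
    rw [chZone H hj]
    have := thr_le H i
    have := thr_ge (T := T) (a := a) (b := b) (mu := mu) i
    have h2 := n2_eq H i
    have h4 := n4_eq H i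
    have h5 := n5_eq (T := T) H i
    omega
  · intro h
    rcases h with h | h
    · obtain ⟨hr, _⟩ := ext_eq_coe h
      have := (chA H hr).1 h
      have := thr_ge (T := T) (a := a) (b := b) (mu := mu) i
      have h2 := n2_eq H i
      have h3 := n3_eq H i
      have := thr_le H i
      have h4 := n4_eq H i
      have h5 := n5_eq (T := T) H i
      omega
    · obtain ⟨hr, _⟩ := ext_eq_coe h
      have := (chB H hr).1 h
      have := thr_le H i
      have h2 := n2_eq H i
      have h3 := n3_eq H i
      have h4 := n4_eq H i
      have h5 := n5_eq (T := T) H i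
      have := thr_ge (T := T) (a := a) (b := b) (mu := mu) i
      omega

/-! #### `bk` preserves generalized semistandardness -/

lemma bk_row_mono (H : Ctx mu P a b T) (i : ℕ) {j j' : ℕ} (h : j ≤ j') :
    extT mu (bk mu a b T) i j ≤ extT mu (bk mu a b T) i j' := by
  have hm : extT mu T i j ≤ extT mu T i j' := ext_row_mono H h
  rw [extT_bk, extT_bk]
  by_cases hz : extT mu T i j = (a : WithTop Colour) ∨ extT mu T i j = (b : WithTop Colour) <;>
    by_cases hz' : extT mu T i j' = (a : WithTop Colour) ∨ extT mu T i j' = (b : WithTop Colour)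
  · rw [if_pos hz, if_pos hz']
    by_cases ht : j < thr mu T a b i
    · rw [if_pos ht]
      split_ifs
      · exact le_refl _
      · exact WithTop.coe_le_coe.2 H.hab.le
    · rw [if_neg ht, if_neg (fun hh => ht (lt_of_le_of_lt h hh))]
  · rw [if_pos hz, if_neg hz']
    have hbu : (b : WithTop Colour) < extT mu T i j' := by
      apply wt_lt_of_notab H.hab H.hadj
      · rcases hz with hz | hz
        · rw [← hz]; exact hm
        · exact le_trans (le_trans (WithTop.coe_le_coe.2 H.hab.le) (le_of_eq hz.symm)) hm
      · exact fun hh => hz' (Or.inl hh)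
      · exact fun hh => hz' (Or.inr hh)
    refine le_trans ?_ hbu.le
    split_ifs
    · exact WithTop.coe_le_coe.2 H.hab.le
    · exact le_refl _
  · rw [if_neg hz, if_pos hz']
    have hu : extT mu T i j < (a : WithTop Colour) := by
      have hub : extT mu T i j ≤ (b : WithTop Colour) := by
        rcases hz' with hz' | hz'
        · exact le_trans hm (le_trans (le_of_eq hz') (WithTop.coe_le_coe.2 H.hab.le))
        · exact le_trans hm (le_of_eq hz')
      rcases lt_or_eq_of_le hub with hlt | heq
      · rcases lt_or_eq_of_le (wt_lt_b_le_a H.hadj hlt) with h2 | h2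
        · exact h2
        · exact absurd (Or.inl h2) hz
      · exact absurd (Or.inr heq) hz
    refine le_trans hu.le ?_
    split_ifs
    · exact le_refl _
    · exact WithTop.coe_le_coe.2 H.hab.le
  · rw [if_neg hz, if_neg hz']
    exact hm

lemma bk_col_step (H : Ctx mu P a b T) (i j : ℕ) :
    extT mu (bk mu a b T) i j ≤ extT mu (bk mu a b T) (i + 1) j ∧
      (∀ x : Colour, extT mu (bk mu a b T) i j = (x : WithTop Colour) →
        extT mu (bk mu a b T) (i + 1) j = (x : WithTop Colour) → ¬ P x) := by
  have hm : extT mu T i j ≤ extT mu T (i + 1) j := ext_col_mono H (Nat.le_succ i)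
  by_cases hz : extT mu T i j = (a : WithTop Colour) ∨ extT mu T i j = (b : WithTop Colour) <;>
    by_cases hz' : extT mu T (i+1) j = (a : WithTop Colour) ∨
      extT mu T (i+1) j = (b : WithTop Colour)
  · -- both in zone: must be a over b, a pair
    rcases hz with hza | hzb
    · rcases hz' with hza' | hzb'
      · exact absurd (ext_col_rep H (Nat.lt_succ_self i) hza hza') (fun hc => hc H.hPa)
      · have hpA : prA mu T a b i j := ⟨hza, hzb'⟩
        have hpB : prB mu T a b (i+1) j := ⟨hzb', i, rfl, hza⟩
        rw [bk_prA H hpA, bk_prB H hpB]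
        refine ⟨WithTop.coe_le_coe.2 H.hab.le, ?_⟩
        intro x h1 h2
        rw [← h2] at h1
        exact absurd (WithTop.coe_inj.1 h1) (ne_of_lt H.hab)
    · rcases hz' with hza' | hzb'
      · rw [hzb] at hm
        have hba : (b : WithTop Colour) ≤ (a : WithTop Colour) :=
          le_trans hm (le_of_eq hza')
        rw [WithTop.coe_le_coe] at hba
        exact absurd hba (not_le.2 H.hab)
      · exact absurd (ext_col_rep H (Nat.lt_succ_self i) hzb hzb') (fun hc => hc H.hPb)
  · -- upper in zone, lower not
    have hbu : (b : WithTop Colour) < extT mu T (i+1) j := by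
      apply wt_lt_of_notab H.hab H.hadj
      · rcases hz with hz | hz
        · rw [← hz]; exact hm
        · exact le_trans (WithTop.coe_le_coe.2 H.hab.le) (le_trans (le_of_eq hz.symm) hm)
      · exact fun hh => hz' (Or.inl hh)
      · exact fun hh => hz' (Or.inr hh)
    have hlt : extT mu (bk mu a b T) i j < extT mu (bk mu a b T) (i+1) j := by
      rw [extT_bk, extT_bk, if_pos hz, if_neg hz']
      refine lt_of_le_of_lt ?_ hbu
      split_ifs
      · exact WithTop.coe_le_coe.2 H.hab.le
      · exact le_refl _
    refine ⟨hlt.le, ?_⟩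
    intro x h1 h2
    rw [h1, h2] at hlt
    exact absurd hlt (lt_irrefl _)
  · -- lower in zone, upper not
    have hu : extT mu T i j < (a : WithTop Colour) := by
      have hub : extT mu T i j ≤ (b : WithTop Colour) := by
        rcases hz' with hz' | hz'
        · exact le_trans hm (le_trans (le_of_eq hz') (WithTop.coe_le_coe.2 H.hab.le))
        · exact le_trans hm (le_of_eq hz')
      rcases lt_or_eq_of_le hub with hlt | heq
      · rcases lt_or_eq_of_le (wt_lt_b_le_a H.hadj hlt) with h2 | h2
        · exact h2
        · exact absurd (Or.inl h2) hz
      · exact absurd (Or.inr heq) hz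
    have hlt : extT mu (bk mu a b T) i j < extT mu (bk mu a b T) (i+1) j := by
      rw [extT_bk, extT_bk, if_neg hz, if_pos hz']
      refine lt_of_lt_of_le hu ?_
      split_ifs
      · exact le_refl _
      · exact WithTop.coe_le_coe.2 H.hab.le
    refine ⟨hlt.le, ?_⟩
    intro x h1 h2
    rw [h1, h2] at hlt
    exact absurd hlt (lt_irrefl _)
  · rw [extT_bk, extT_bk, if_neg hz, if_neg hz']
    exact ⟨hm, fun x h1 h2 => ext_col_rep H (Nat.lt_succ_self i) h1 h2⟩

lemma bk_row_rep (H : Ctx mu P a b T) (i : ℕ) {j j' : ℕ} (h : j ≠ j') {x : Colour}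
    (h1 : extT mu (bk mu a b T) i j = (x : WithTop Colour))
    (h2 : extT mu (bk mu a b T) i j' = (x : WithTop Colour)) : P x := by
  rw [extT_bk] at h1 h2
  by_cases hz : extT mu T i j = (a : WithTop Colour) ∨ extT mu T i j = (b : WithTop Colour) <;>
    by_cases hz' : extT mu T i j' = (a : WithTop Colour) ∨ extT mu T i j' = (b : WithTop Colour)
  · rw [if_pos hz] at h1
    split_ifs at h1
    · rw [WithTop.coe_inj] at h1; rw [← h1]; exact H.hPa
    · rw [WithTop.coe_inj] at h1; rw [← h1]; exact H.hPb
  · rw [if_pos hz] at h1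
    rw [if_neg hz'] at h2
    have : x = a ∨ x = b := by
      split_ifs at h1
      · exact Or.inl (WithTop.coe_inj.1 h1).symm
      · exact Or.inr (WithTop.coe_inj.1 h1).symm
    rcases this with rfl | rfl
    · exact absurd (Or.inl h2) hz'
    · exact absurd (Or.inr h2) hz'
  · rw [if_neg hz] at h1
    rw [if_pos hz'] at h2
    have : x = a ∨ x = b := by
      split_ifs at h2
      · exact Or.inl (WithTop.coe_inj.1 h2).symm
      · exact Or.inr (WithTop.coe_inj.1 h2).symm
    rcases this with rfl | rfl
    · exact absurd (Or.inl h1) hz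
    · exact absurd (Or.inr h1) hz
  · rw [if_neg hz] at h1
    rw [if_neg hz'] at h2
    exact ext_row_rep H h h1 h2

/-- Recover `GS` from the `extT`-level facts. -/
lemma GS_of_ext {S : Cell mu → Colour}
    (hrm : ∀ i j j', j ≤ j' → extT mu S i j ≤ extT mu S i j')
    (hcm : ∀ i j, extT mu S i j ≤ extT mu S (i + 1) j)
    (hrr : ∀ (i j j' : ℕ) (x : Colour), j ≠ j' → extT mu S i j = (x : WithTop Colour) →
      extT mu S i j' = (x : WithTop Colour) → P x)
    (hcr : ∀ (i j : ℕ) (x : Colour), extT mu S i j = (x : WithTop Colour) →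
      extT mu S (i + 1) j = (x : WithTop Colour) → ¬ P x) : GS P S := by
  have gen : ∀ k i j, extT mu S i j ≤ extT mu S (i + k) j := by
    intro k
    induction k with
    | zero => intro i j; exact le_refl _
    | succ k ih =>
      intro i j
      calc extT mu S i j ≤ extT mu S (i + k) j := ih i j
        _ ≤ extT mu S (i + k + 1) j := hcm _ _
  have genle : ∀ i i' j, i ≤ i' → extT mu S i j ≤ extT mu S i' j := by
    intro i i' j hii
    obtain ⟨k, rfl⟩ := Nat.exists_eq_add_of_le hii
    exact gen k i j
  refine ⟨?_, ?_, ?_, ?_⟩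
  · intro c c' h1 h2
    have e1 := extT_cell S c
    have e2 := extT_cell S c'
    have h1' : c'.1.1 = c.1.1 := by rw [h1]
    rw [h1'] at e2
    have := hrm c.1.1 c.2.1 c'.2.1 h2.le
    rw [e1, e2] at this
    exact WithTop.coe_le_coe.1 this
  · intro c c' h2 h1
    have e1 := extT_cell S c
    have e2 := extT_cell S c'
    rw [← h2] at e2
    have := genle c.1.1 c'.1.1 c.2.1 (le_of_lt h1)
    rw [e1, e2] at this
    exact WithTop.coe_le_coe.1 this

  · intro c c' h1 h2 heq
    have e1 := extT_cell S c
    have e2 := extT_cell S c'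
    have h1' : c'.1.1 = c.1.1 := by rw [h1]
    rw [h1'] at e2
    rw [← heq] at e2
    exact hrr c.1.1 c.2.1 c'.2.1 (S c) h2 e1 e2
  · intro c c' h2 h1 heq
    have e1 := extT_cell S c
    have e2 := extT_cell S c'
    rw [← h2] at e2
    rw [← heq] at e2
    have hne : c.1.1 ≠ c'.1.1 := fun hh => h1 (Fin.ext hh)
    rcases lt_or_gt_of_ne hne with hlt | hlt
    · have hstep : extT mu S (c.1.1 + 1) c.2.1 = ((S c : Colour) : WithTop Colour) := by
        apply le_antisymm
        · rw [← e2]; exact genle _ _ _ hlt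
        · rw [← e1]; exact hcm _ _
      exact hcr c.1.1 c.2.1 (S c) e1 hstep
    · have hstep : extT mu S (c'.1.1 + 1) c.2.1 = ((S c : Colour) : WithTop Colour) := by
        apply le_antisymm
        · rw [← e1]; exact genle _ _ _ hlt
        · rw [← e2]; exact hcm _ _
      exact hcr c'.1.1 c.2.1 (S c) e2 hstep

lemma bk_GS (H : Ctx mu P a b T) : GS P (bk mu a b T) :=
  GS_of_ext (fun i j j' h => bk_row_mono H i h) (fun i j => (bk_col_step H i j).1)
    (fun i j j' x h h1 h2 => bk_row_rep H i h h1 h2)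
    (fun i j x h1 h2 => (bk_col_step H i j).2 x h1 h2)

lemma bk_Ctx (H : Ctx mu P a b T) : Ctx mu P a b (bk mu a b T) :=
  ⟨H.hs, bk_GS H, H.hab, H.hadj, H.hPa, H.hPb⟩

/-! #### `bk` is an involution -/

lemma bk_q1_iff (H : Ctx mu P a b T) (i j : ℕ) :
    q1 mu (bk mu a b T) a i j ↔ q1 mu T a i j := by
  rw [q1, q1, extT_bk]
  by_cases hz : extT mu T i j = (a : WithTop Colour) ∨ extT mu T i j = (b : WithTop Colour)
  · rw [if_pos hz]
    constructor
    · intro h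
      split_ifs at h
      · exact absurd h (lt_irrefl _)
      · exact absurd h (not_lt.2 (WithTop.coe_le_coe.2 H.hab.le))
    · intro h
      rcases hz with hz | hz
      · rw [hz] at h; exact absurd h (lt_irrefl _)
      · rw [hz] at h; exact absurd h (not_lt.2 (WithTop.coe_le_coe.2 H.hab.le))
  · rw [if_neg hz]

lemma bk_prA_iff (H : Ctx mu P a b T) (i j : ℕ) :
    prA mu (bk mu a b T) a b i j ↔ prA mu T a b i j := by
  constructor
  · rintro ⟨h1, h2⟩
    have hz1 := (bk_zone_iff H).1 (Or.inl h1)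
    have hz2 := (bk_zone_iff (i := i + 1) H).1 (Or.inr h2)
    rcases hz1 with hza | hzb
    · rcases hz2 with hza' | hzb'
      · exact absurd (ext_col_rep H (Nat.lt_succ_self i) hza hza') (fun hc => hc H.hPa)
      · exact ⟨hza, hzb'⟩
    · rcases hz2 with hza' | hzb'
      · have hmm := ext_col_mono (j := j) H (Nat.le_succ i)
        rw [hzb, hza'] at hmm
        exact absurd (WithTop.coe_le_coe.1 hmm) (not_le.2 H.hab)
      · exact absurd (ext_col_rep H (Nat.lt_succ_self i) hzb hzb') (fun hc => hc H.hPb)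
  · intro h
    exact ⟨bk_prA H h, bk_prB H ⟨h.2, i, rfl, h.1⟩⟩

lemma bk_prB_iff (H : Ctx mu P a b T) (i j : ℕ) :
    prB mu (bk mu a b T) a b i j ↔ prB mu T a b i j := by
  constructor
  · rintro ⟨h1, i', rfl, h2⟩
    have hp := (bk_prA_iff H i' j).1 ⟨h2, h1⟩
    exact ⟨hp.2, i', rfl, hp.1⟩
  · rintro ⟨h1, i', rfl, h2⟩
    exact ⟨bk_prB H ⟨h1, i', rfl, h2⟩, i', rfl, bk_prA H ⟨h2, h1⟩⟩

lemma n1_bk (H : Ctx mu P a b T) (i : ℕ) : n1 mu (bk mu a b T) a i = n1 mu T a i := by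
  rw [n1, n1, nC, nC]
  apply congrArg
  apply Finset.filter_congr
  intro j _
  exact bk_q1_iff H i j

lemma n2_bk (H : Ctx mu P a b T) (i : ℕ) : n2 mu (bk mu a b T) a b i = n2 mu T a b i := by
  rw [n2, n2, nC, nC]
  apply congrArg
  apply Finset.filter_congr
  intro j _
  rw [q2, q2]
  exact or_congr (bk_q1_iff H i j) (bk_prA_iff H i j)

lemma card_filter_between {L x y : ℕ} (p : ℕ → Prop)
    (h : ∀ j, j < L → (p j ↔ (x ≤ j ∧ j < y))) (hy : y ≤ L) :
    ((Finset.range L).filter p).card = y - x := by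
  have he : (Finset.range L).filter p = Finset.Ico x y := by
    ext j
    simp only [Finset.mem_filter, Finset.mem_range, Finset.mem_Ico]
    constructor
    · rintro ⟨hj, hp⟩
      exact (h j hj).1 hp
    · intro hj
      have hjL : j < L := lt_of_lt_of_le hj.2 hy
      exact ⟨hjL, (h j hjL).2 hj⟩
  rw [he, Nat.card_Ico]

lemma card_filter_iff {L : ℕ} (p q : ℕ → Prop)
    (h : ∀ j, j < L → (p j ↔ q j)) :
    ((Finset.range L).filter p).card = ((Finset.range L).filter q).card := by
  have he : (Finset.range L).filter p = (Finset.range L).filter q := by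
    ext j
    simp only [Finset.mem_filter, Finset.mem_range]
    constructor
    · rintro ⟨hj, hp⟩
      exact ⟨hj, (h j hj).1 hp⟩
    · rintro ⟨hj, hq⟩
      exact ⟨hj, (h j hj).2 hq⟩
  rw [he]

lemma nfrB_bk (H : Ctx mu P a b T) (i : ℕ) :
    nfrB mu (bk mu a b T) a b i = n4 mu T a b i - thr mu T a b i := by
  rw [nfrB, nC]
  have hy : n4 mu T a b i ≤ rlen mu i := by
    have h5 := n5_eq (T := T) H i
    have := n5_le_rlen (T := T) (b := b) (mu := mu) i
    omega
  have hiff : ∀ j, j < rlen mu i → (frB mu (bk mu a b T) a b i j ↔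
      (thr mu T a b i ≤ j ∧ j < n4 mu T a b i)) := by
    intro j hj
    rw [frB, extbk_eq_b_iff H, bk_prB_iff H i j, chPrB H hj]
    have := thr_le H i
    have h5 := n5_eq (T := T) H i
    constructor
    · rintro ⟨⟨h1, h2⟩, h3⟩
      omega
    · rintro ⟨h1, h2⟩
      refine ⟨⟨h1, by omega⟩, by omega⟩
  rw [card_filter_between (frB mu (bk mu a b T) a b i) hiff hy]

lemma thr_bk (H : Ctx mu P a b T) (i : ℕ) :
    thr mu (bk mu a b T) a b i = n3 mu T a i := by
  rw [thr, n2_bk H, nfrB_bk H]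
  have := thr_le H i
  have h2 := n2_eq H i
  have h3 := n3_eq H i
  have h4 := n4_eq H i
  rw [thr] at this ⊢
  omega

lemma bk_bk (H : Ctx mu P a b T) : bk mu a b (bk mu a b T) = T := by
  funext c
  have hc := cell_rlen c
  have e1 := extT_cell T c
  have e2 := extT_cell (bk mu a b T) c
  have hzz : (bk mu a b T c = a ∨ bk mu a b T c = b) ↔ (T c = a ∨ T c = b) := by
    constructor
    · intro h
      have : extT mu (bk mu a b T) c.1.1 c.2.1 = (a : WithTop Colour) ∨
          extT mu (bk mu a b T) c.1.1 c.2.1 = (b : WithTop Colour) := by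
        rcases h with h | h
        · exact Or.inl (by rw [e2, h])
        · exact Or.inr (by rw [e2, h])
      have := (bk_zone_iff H).1 this
      rcases this with h' | h'
      · rw [e1] at h'; exact Or.inl (WithTop.coe_inj.1 h')
      · rw [e1] at h'; exact Or.inr (WithTop.coe_inj.1 h')
    · intro h
      have : extT mu T c.1.1 c.2.1 = (a : WithTop Colour) ∨
          extT mu T c.1.1 c.2.1 = (b : WithTop Colour) := by
        rcases h with h | h
        · exact Or.inl (by rw [e1, h])
        · exact Or.inr (by rw [e1, h])
      have := (bk_zone_iff H).2 this
      rcases this with h' | h'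
      · rw [e2] at h'; exact Or.inl (WithTop.coe_inj.1 h')
      · rw [e2] at h'; exact Or.inr (WithTop.coe_inj.1 h')
  show (if bk mu a b T c = a ∨ bk mu a b T c = b
      then (if (c.2 : ℕ) < thr mu (bk mu a b T) a b c.1.1 then a else b)
      else bk mu a b T c) = T c
  by_cases hz : T c = a ∨ T c = b
  · rw [if_pos (hzz.2 hz), thr_bk H]
    rcases hz with hz | hz
    · have hA : extT mu T c.1.1 c.2.1 = (a : WithTop Colour) := by rw [e1, hz]
      have := (chA H hc).1 hA
      rw [if_pos this.2, hz]
    · have hB : extT mu T c.1.1 c.2.1 = (b : WithTop Colour) := by rw [e1, hz]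
      have := (chB H hc).1 hB
      rw [if_neg (not_lt.2 this.1), hz]
  · rw [if_neg (fun h => hz (hzz.1 h))]
    show bk mu a b T c = T c
    simp only [bk]
    rw [if_neg hz]

/-! #### Content of `bk T` -/

lemma cellcard_eq_sum (mu : List ℕ) (Q : ℕ → ℕ → Prop) :
    (Finset.univ.filter fun c : Cell mu => Q c.1.1 c.2.1).card
      = ∑ i ∈ Finset.range mu.length, nC mu Q i := by
  classical
  rw [Finset.card_filter]
  rw [show (Finset.univ : Finset (Cell mu)) = Finset.univ.sigma (fun _ => Finset.univ) from
    Finset.univ_sigma_univ.symm]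
  rw [Finset.sum_sigma]
  rw [← Fin.sum_univ_eq_sum_range (fun i => nC mu Q i) mu.length]
  apply Finset.sum_congr rfl
  intro i _
  rw [nC, Finset.card_filter]
  have hre : Finset.range (rlen mu ↑i) = Finset.range (mu.get i) := by
    rw [rlen_eq_get i.2]
  rw [hre, ← Fin.sum_univ_eq_sum_range (fun jj => if Q i.1 jj then 1 else 0) (mu.get i)]

lemma count_eq_sum (mu : List ℕ) (T : Cell mu → Colour) (x : Colour) :
    (Finset.univ.filter fun c : Cell mu => T c = x).card
      = ∑ i ∈ Finset.range mu.length,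
          nC mu (fun i j => extT mu T i j = (x : WithTop Colour)) i := by
  rw [← cellcard_eq_sum mu (fun i j => extT mu T i j = (x : WithTop Colour))]
  congr 1
  ext c
  simp only [Finset.mem_filter, Finset.mem_univ, true_and]
  rw [extT_cell T c, WithTop.coe_inj]

lemma prA_below {i j : ℕ} (h : prA mu T a b i j) : j < rlen mu (i + 1) := by
  obtain ⟨hr, _⟩ := ext_eq_coe h.2
  exact hr

lemma card_prA_eq_prB (H : Ctx mu P a b T) :
    (Finset.univ.filter fun c : Cell mu => prA mu T a b c.1.1 c.2.1).card =
      (Finset.univ.filter fun c : Cell mu => prB mu T a b c.1.1 c.2.1).card := by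
  classical
  apply Finset.card_bij
    (fun c hc => mkCell mu (prA_below (Finset.mem_filter.1 hc).2))
  · intro c hc
    rw [Finset.mem_filter]
    refine ⟨Finset.mem_univ _, ?_⟩
    have hp := (Finset.mem_filter.1 hc).2
    exact ⟨hp.2, c.1.1, rfl, hp.1⟩
  · intro c1 h1 c2 h2 heq
    have e1 := congrArg (fun d : Cell mu => d.1.1) heq
    have e2 := congrArg (fun d : Cell mu => (d.2 : ℕ)) heq
    have e1x : c1.1.1 + 1 = c2.1.1 + 1 := e1
    have e2x : (c1.2 : ℕ) = (c2.2 : ℕ) := e2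
    exact cell_ext (by omega) e2x
  · intro c' hc'
    obtain ⟨hb, i', hi', ha⟩ := (Finset.mem_filter.1 hc').2
    obtain ⟨hr, _⟩ := ext_eq_coe ha
    have hpA : prA mu T a b i' (c'.2 : ℕ) := ⟨ha, by rw [← hi']; exact hb⟩
    refine ⟨mkCell mu hr, ?_, ?_⟩
    · rw [Finset.mem_filter]
      exact ⟨Finset.mem_univ _, hpA⟩
    · exact cell_ext hi'.symm rfl

lemma sum_nprA_eq_nprB (H : Ctx mu P a b T) :
    ∑ i ∈ Finset.range mu.length, nprA mu T a b i
      = ∑ i ∈ Finset.range mu.length, nprB mu T a b i := by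
  have h1 := cellcard_eq_sum mu (prA mu T a b)
  have h2 := cellcard_eq_sum mu (prB mu T a b)
  rw [show (∑ i ∈ Finset.range mu.length, nprA mu T a b i)
    = ∑ i ∈ Finset.range mu.length, nC mu (prA mu T a b) i from rfl]
  rw [show (∑ i ∈ Finset.range mu.length, nprB mu T a b i)
    = ∑ i ∈ Finset.range mu.length, nC mu (prB mu T a b) i from rfl]
  rw [← h1, ← h2]
  exact card_prA_eq_prB H

lemma bk_count_a (H : Ctx mu P a b T) :
    (Finset.univ.filter fun c : Cell mu => bk mu a b T c = a).card
      = (Finset.univ.filter fun c : Cell mu => T c = b).card := by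
  rw [count_eq_sum, count_eq_sum]
  have hrowA : ∀ i, nC mu (fun i j => extT mu (bk mu a b T) i j = (a : WithTop Colour)) i
      = nprA mu T a b i + nfrB mu T a b i := by
    intro i
    rw [nC]
    have hy : thr mu T a b i ≤ rlen mu i := by
      have := thr_le H i
      have h4 := n4_eq H i
      have h5 := n5_eq (T := T) H i
      have := n5_le_rlen (T := T) (b := b) (mu := mu) i
      omega
    rw [card_filter_between (fun j => extT mu (bk mu a b T) i j = (a : WithTop Colour))
      (fun j _ => extbk_eq_a_iff H) hy]
    have h2 := n2_eq H i
    rw [thr]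
    omega
  have hrowB : ∀ i, nC mu (fun i j => extT mu T i j = (b : WithTop Colour)) i
      = nfrB mu T a b i + nprB mu T a b i := by
    intro i
    rw [nC]
    rw [card_filter_between (fun j => extT mu T i j = (b : WithTop Colour))
      (fun j hj => chB H hj) (n5_le_rlen i)]
    have h4 := n4_eq H i
    have h5 := n5_eq (T := T) H i
    omega
  rw [Finset.sum_congr rfl (fun i _ => hrowA i), Finset.sum_congr rfl (fun i _ => hrowB i)]
  rw [Finset.sum_add_distrib, Finset.sum_add_distrib, sum_nprA_eq_nprB H]
  omega

lemma bk_count_b (H : Ctx mu P a b T) :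
    (Finset.univ.filter fun c : Cell mu => bk mu a b T c = b).card
      = (Finset.univ.filter fun c : Cell mu => T c = a).card := by
  rw [count_eq_sum, count_eq_sum]
  have hrowB : ∀ i, nC mu (fun i j => extT mu (bk mu a b T) i j = (b : WithTop Colour)) i
      = nfrA mu T a b i + nprB mu T a b i := by
    intro i
    rw [nC]
    rw [card_filter_between (fun j => extT mu (bk mu a b T) i j = (b : WithTop Colour))
      (fun j _ => extbk_eq_b_iff H) (n5_le_rlen i)]
    have h2 := n2_eq H i
    have h3 := n3_eq H i
    have h4 := n4_eq H i
    have h5 := n5_eq (T := T) H i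
    rw [thr]
    omega
  have hrowA : ∀ i, nC mu (fun i j => extT mu T i j = (a : WithTop Colour)) i
      = nprA mu T a b i + nfrA mu T a b i := by
    intro i
    rw [nC]
    have hy : n3 mu T a i ≤ rlen mu i := by
      have h4 := n4_eq H i
      have h5 := n5_eq (T := T) H i
      have := n5_le_rlen (T := T) (b := b) (mu := mu) i
      omega
    rw [card_filter_between (fun j => extT mu T i j = (a : WithTop Colour))
      (fun j hj => chA H hj) hy]
    have h2 := n2_eq H i
    have h3 := n3_eq H i
    omega
  rw [Finset.sum_congr rfl (fun i _ => hrowB i), Finset.sum_congr rfl (fun i _ => hrowA i)]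
  rw [Finset.sum_add_distrib, Finset.sum_add_distrib, sum_nprA_eq_nprB H]
  omega

lemma bk_eq_ne {x : Colour} (hxa : x ≠ a) (hxb : x ≠ b) (c : Cell mu) :
    bk mu a b T c = x ↔ T c = x := by
  show (if T c = a ∨ T c = b then (if (c.2 : ℕ) < thr mu T a b c.1.1 then a else b) else T c) = x
      ↔ T c = x
  by_cases hz : T c = a ∨ T c = b
  · rw [if_pos hz]
    constructor
    · intro h
      split_ifs at h
      · exact absurd h.symm hxa
      · exact absurd h.symm hxb
    · intro h
      rcases hz with hz | hz
      · rw [h] at hz; exact absurd hz hxa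
      · rw [h] at hz; exact absurd hz hxb
  · rw [if_neg hz]

lemma bk_count_ne (H : Ctx mu P a b T) {x : Colour} (hxa : x ≠ a) (hxb : x ≠ b) :
    (Finset.univ.filter fun c : Cell mu => bk mu a b T c = x).card
      = (Finset.univ.filter fun c : Cell mu => T c = x).card := by
  apply congrArg
  apply Finset.filter_congr
  intro c _
  exact bk_eq_ne hxa hxb c

/-! #### Colours -/

def isC (x : Colour) : Prop := ∃ k, x = cCol k
def isD (x : Colour) : Prop := ∃ k, x = dCol k

lemma colour_cases (x : Colour) : isC x ∨ isD x := by
  rcases h : ofLex x with k | k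
  · exact Or.inl ⟨k, by rw [← toLex_ofLex x, h]; rfl⟩
  · exact Or.inr ⟨k, by rw [← toLex_ofLex x, h]; rfl⟩

lemma cCol_ne_dCol (k m : ℕ) : cCol k ≠ dCol m := by
  intro h
  exact Sum.inl_ne_inr (toLex.injective (show toLex (Sum.inl k : ℕ ⊕ ℕ) = toLex (Sum.inr m) from h))

lemma cCol_inj {k m : ℕ} (h : cCol k = cCol m) : k = m :=
  Sum.inl.inj (toLex.injective h)

lemma dCol_inj {k m : ℕ} (h : dCol k = dCol m) : k = m :=
  Sum.inr.inj (toLex.injective h)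

lemma not_isC_iff (x : Colour) : ¬ isC x ↔ isD x := by
  constructor
  · intro h
    rcases colour_cases x with hc | hd
    · exact absurd hc h
    · exact hd
  · rintro ⟨k, rfl⟩ ⟨m, hm⟩
    exact cCol_ne_dCol m k hm.symm

lemma cCol_lt_cCol_iff {k m : ℕ} : cCol k < cCol m ↔ k < m := by
  rw [cCol, cCol, Sum.Lex.toLex_lt_toLex, Sum.lex_inl_inl]

lemma dCol_lt_dCol_iff {k m : ℕ} : dCol k < dCol m ↔ k < m := by
  rw [dCol, dCol, Sum.Lex.toLex_lt_toLex, Sum.lex_inr_inr]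

lemma cCol_lt_dCol (k m : ℕ) : cCol k < dCol m := by
  rw [cCol, dCol, Sum.Lex.toLex_lt_toLex]
  exact Sum.Lex.sep _ _

lemma not_dCol_lt_cCol (k m : ℕ) : ¬ dCol k < cCol m := by
  rw [cCol, dCol, Sum.Lex.toLex_lt_toLex]
  exact Sum.lex_inr_inl

lemma adj_c (k : ℕ) : ∀ z : Colour, cCol k < z → cCol (k + 1) ≤ z := by
  intro z hz
  rcases colour_cases z with ⟨m, rfl⟩ | ⟨m, rfl⟩
  · have hk : k < m := cCol_lt_cCol_iff.1 hz
    rcases Nat.lt_or_ge (k + 1) m with h | h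
    · exact (cCol_lt_cCol_iff.2 h).le
    · have : k + 1 = m := by omega
      rw [this]
  · exact (cCol_lt_dCol _ _).le

lemma adj_d (k : ℕ) : ∀ z : Colour, dCol k < z → dCol (k + 1) ≤ z := by
  intro z hz
  rcases colour_cases z with ⟨m, rfl⟩ | ⟨m, rfl⟩
  · exact absurd hz (not_dCol_lt_cCol _ _)
  · have hk : k < m := dCol_lt_dCol_iff.1 hz
    rcases Nat.lt_or_ge (k + 1) m with h | h
    · exact (dCol_lt_dCol_iff.2 h).le
    · have : k + 1 = m := by omega
      rw [this]

lemma sstd_iff_GS (T : Cell mu → Colour) : IsSemistd T ↔ GS isC T := by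
  constructor
  · rintro ⟨h1, h2, h3, h4⟩
    refine ⟨h1, h2, h3, ?_⟩
    intro c c' hj hi heq
    exact (not_isC_iff _).2 (h4 c c' hj hi heq)
  · rintro ⟨h1, h2, h3, h4⟩
    refine ⟨h1, h2, h3, ?_⟩
    intro c c' hj hi heq
    exact (not_isC_iff _).1 (h4 c c' hj hi heq)

/-! #### The conjugate partition -/

def conjP (mu : List ℕ) : List ℕ :=
  (List.range (mu.headD 0)).map (fun j => mu.countP (fun x => decide (j < x)))

lemma mem_le_headD {x : ℕ} (hs : mu.Pairwise (· ≥ ·)) (hx : x ∈ mu) : x ≤ mu.headD 0 := by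
  rcases mu with _ | ⟨y, t⟩
  · simp at hx
  · obtain ⟨hy, ht⟩ := List.pairwise_cons.mp hs
    rcases List.mem_cons.1 hx with rfl | hx
    · simp
    · simpa using hy x hx

lemma count_lt_iff (mu : List ℕ) (hs : mu.Pairwise (· ≥ ·)) (i j : ℕ) :
    j < mu.countP (fun x => decide (i < x)) ↔ i < mu.getD j 0 := by
  induction mu generalizing j with
  | nil => simp
  | cons x t ih =>
    obtain ⟨hx, ht⟩ := List.pairwise_cons.mp hs
    by_cases hix : i < x
    · rw [List.countP_cons_of_pos (by simpa using hix)]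
      cases j with
      | zero => simpa using hix
      | succ j =>
        rw [List.getD_cons_succ]
        rw [← ih ht j]
        omega
    · have h0 : t.countP (fun y => decide (i < y)) = 0 := by
        apply List.countP_eq_zero.mpr
        intro y hy
        simp only [decide_eq_true_eq]
        have := hx y hy
        omega
      rw [List.countP_cons_of_neg (by simpa using hix), h0]
      simp only [Nat.not_lt_zero, false_iff, not_lt]
      cases j with
      | zero => simpa using not_lt.1 hix
      | succ j =>
        rw [List.getD_cons_succ]
        rcases Nat.lt_or_ge j t.length with hj | hj
        · rw [List.getD_eq_getElem _ _ hj]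
          have : t[j] ∈ t := List.getElem_mem hj
          have := hx _ this
          omega
        · rw [List.getD_eq_default _ _ hj]
          omega

lemma rlen_conjP (hs : mu.Pairwise (· ≥ ·)) (i : ℕ) :
    rlen (conjP mu) i = mu.countP (fun x => decide (i < x)) := by
  rcases Nat.lt_or_ge i (mu.headD 0) with h | h
  · rw [rlen]
    have hlen : i < (conjP mu).length := by
      rw [conjP, List.length_map, List.length_range]
      exact h
    rw [List.getD_eq_getElem _ _ hlen]
    simp [conjP]
  · have h0 : mu.countP (fun x => decide (i < x)) = 0 := by
      apply List.countP_eq_zero.mpr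
      intro y hy
      simp only [decide_eq_true_eq]
      have := mem_le_headD hs hy
      omega
    rw [h0, rlen, List.getD_eq_default]
    rw [conjP, List.length_map, List.length_range]
    exact h

lemma rlen_conjP_iff (hs : mu.Pairwise (· ≥ ·)) (i j : ℕ) :
    j < rlen (conjP mu) i ↔ i < rlen mu j := by
  rw [rlen_conjP hs, count_lt_iff mu hs, rlen]

lemma conjP_sorted (hs : mu.Pairwise (· ≥ ·)) : (conjP mu).Pairwise (· ≥ ·) := by
  rw [List.pairwise_iff_get]
  intro i j hij
  have hi : rlen (conjP mu) i.1 = (conjP mu).get i := by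
    rw [rlen_eq_get i.2]
  have hj : rlen (conjP mu) j.1 = (conjP mu).get j := by
    rw [rlen_eq_get j.2]
  rw [← hi, ← hj, rlen_conjP hs, rlen_conjP hs]
  apply List.countP_mono_left
  intro x _ hx
  simp only [decide_eq_true_eq] at hx ⊢
  have : i.1 < j.1 := hij
  omega

lemma conjP_rlen_anti (hs : mu.Pairwise (· ≥ ·)) :
    ∀ ⦃i i' : ℕ⦄, i ≤ i' → rlen (conjP mu) i' ≤ rlen (conjP mu) i := by
  intro i i' h
  rw [rlen_conjP hs, rlen_conjP hs]
  apply List.countP_mono_left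
  intro x _ hx
  simp only [decide_eq_true_eq] at hx ⊢
  omega

lemma rlen_anti (hs : mu.Pairwise (· ≥ ·)) :
    ∀ ⦃i i' : ℕ⦄, i ≤ i' → rlen mu i' ≤ rlen mu i := by
  intro i i' h
  rcases Nat.lt_or_ge i' mu.length with h' | h'
  · have hii : i < mu.length := lt_of_le_of_lt h h'
    rw [rlen_eq_get h', rlen_eq_get hii]
    rcases eq_or_lt_of_le h with rfl | hlt
    · exact le_refl _
    · exact List.pairwise_iff_get.mp hs ⟨i, hii⟩ ⟨i', h'⟩ hlt
  · rw [rlen, List.getD_eq_default _ _ h']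
    exact Nat.zero_le _

/-- Transposition of cells. -/
def cellConj (mu : List ℕ) (hs : mu.Pairwise (· ≥ ·)) :
    Cell mu ≃ Cell (conjP mu) where
  toFun c := mkCell (conjP mu) ((rlen_conjP_iff hs c.2.1 c.1.1).2 (cell_rlen c))
  invFun c' := mkCell mu ((rlen_conjP_iff hs c'.1.1 c'.2.1).1 (cell_rlen c'))
  left_inv c := cell_ext rfl rfl
  right_inv c' := cell_ext rfl rfl

lemma GS_conj_fwd (hs : mu.Pairwise (· ≥ ·)) {P : Colour → Prop} {T : Cell mu → Colour}
    (h : GS P T) :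
    GS (fun x => ¬ P x) (fun c' => T ((cellConj mu hs).symm c')) := by
  obtain ⟨h1, h2, h3, h4⟩ := h
  refine ⟨?_, ?_, ?_, ?_⟩
  · intro c c' hj hi
    apply h2 ((cellConj mu hs).symm c) ((cellConj mu hs).symm c')
    · show c.1.1 = c'.1.1
      rw [hj]
    · exact Fin.lt_def.2 hi
  · intro c c' hj hi
    apply h1 ((cellConj mu hs).symm c) ((cellConj mu hs).symm c')
    · exact Fin.ext hj
    · exact Fin.lt_def.1 hi
  · intro c c' hj hi heq
    apply h4 ((cellConj mu hs).symm c) ((cellConj mu hs).symm c')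
    · show c.1.1 = c'.1.1
      rw [hj]
    · intro hh
      exact hi (congrArg Fin.val hh)
    · exact heq
  · intro c c' hj hi heq hP
    exact hP (h3 ((cellConj mu hs).symm c) ((cellConj mu hs).symm c')
      (Fin.ext hj) (fun hh => hi (Fin.ext hh)) heq)

lemma GS_conj_bwd (hs : mu.Pairwise (· ≥ ·)) {P : Colour → Prop} {T : Cell mu → Colour}
    (h : GS (fun x => ¬ P x) (fun c' => T ((cellConj mu hs).symm c'))) : GS P T := by
  obtain ⟨h1, h2, h3, h4⟩ := h
  set e := cellConj mu hs with he
  refine ⟨?_, ?_, ?_, ?_⟩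
  · intro c c' hj hi
    have := h2 (e c) (e c') (show c.1.1 = c'.1.1 from congrArg Fin.val hj) (Fin.lt_def.2 hi)
    simpa using this
  · intro c c' hj hi
    have := h1 (e c) (e c') (Fin.ext hj) (Fin.lt_def.1 hi)
    simpa using this
  · intro c c' hj hi heq
    have := h4 (e c) (e c') (show c.1.1 = c'.1.1 from congrArg Fin.val hj)
      (fun hh => hi (congrArg Fin.val hh))
      (by simpa using heq)
    simp only [Equiv.symm_apply_apply] at this
    exact not_not.1 this
  · intro c c' hj hi heq
    have := h3 (e c) (e c') (Fin.ext hj) (fun hh => hi (Fin.ext hh))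
      (by simpa using heq)
    simpa using this

lemma card_filter_equiv {γ δ : Type*} [Fintype γ] [Fintype δ] (e : γ ≃ δ) (p : δ → Prop)
    [DecidablePred p] [DecidablePred fun c => p (e c)] :
    (Finset.univ.filter fun c => p (e c)).card = (Finset.univ.filter p).card := by
  apply Finset.card_bij (fun c _ => e c)
  · intro c hc
    rw [Finset.mem_filter] at hc ⊢
    exact ⟨Finset.mem_univ _, hc.2⟩
  · intro c1 _ c2 _ hcc
    exact e.injective hcc
  · intro d hd
    rw [Finset.mem_filter] at hd
    refine ⟨e.symm d, ?_, by simp⟩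
    rw [Finset.mem_filter]
    refine ⟨Finset.mem_univ _, ?_⟩
    simpa using hd.2

lemma hasType_conj (hs : mu.Pairwise (· ≥ ·)) {T : Cell mu → Colour} {α β : List ℕ}
    (h : HasType α β T) : HasType α β (fun c' => T ((cellConj mu hs).symm c')) := by
  obtain ⟨hc, hd⟩ := h
  constructor
  · intro k
    exact Eq.trans (card_filter_equiv (cellConj mu hs).symm (fun c => T c = cCol k)) (hc k)
  · intro k
    exact Eq.trans (card_filter_equiv (cellConj mu hs).symm (fun c => T c = dCol k)) (hd k)

lemma hasType_conj_bwd (hs : mu.Pairwise (· ≥ ·)) {T : Cell mu → Colour} {α β : List ℕ}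
    (h : HasType α β (fun c' => T ((cellConj mu hs).symm c'))) : HasType α β T := by
  obtain ⟨hc, hd⟩ := h
  constructor
  · intro k
    exact Eq.trans
      (card_filter_equiv (cellConj mu hs).symm (fun c => T c = cCol k)).symm (hc k)
  · intro k
    exact Eq.trans
      (card_filter_equiv (cellConj mu hs).symm (fun c => T c = dCol k)).symm (hd k)

/-- Moving to the conjugate diagram. -/
lemma card_conj_side (hs : mu.Pairwise (· ≥ ·)) (α β : List ℕ) :
    Nat.card {T : Cell mu → Colour // HasType α β T ∧ IsSemistd T} =
      Nat.card {S : Cell (conjP mu) → Colour //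
        HasType α β S ∧ GS (fun z => ¬ isC z) S} := by
  apply Nat.card_congr
  refine ⟨fun Tp => ⟨fun c' => Tp.1 ((cellConj mu hs).symm c'), ?_, ?_⟩,
      fun Sp => ⟨fun c => Sp.1 ((cellConj mu hs) c), ?_, ?_⟩, ?_, ?_⟩
  · exact hasType_conj hs Tp.2.1
  · exact GS_conj_fwd hs ((sstd_iff_GS Tp.1).1 Tp.2.2)
  · -- HasType for pulled-back S
    have hS := Sp.2.1
    have : (fun c' => (fun c => Sp.1 ((cellConj mu hs) c)) ((cellConj mu hs).symm c')) = Sp.1 := by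
      funext c'
      simp
    apply hasType_conj_bwd hs
    rw [this]
    exact hS
  · have : (fun c' => (fun c => Sp.1 ((cellConj mu hs) c)) ((cellConj mu hs).symm c')) = Sp.1 := by
      funext c'
      simp
    apply (sstd_iff_GS _).2
    apply GS_conj_bwd hs (P := isC)
    rw [this]
    exact Sp.2.2
  · intro Tp
    apply Subtype.ext
    funext c
    simp
  · intro Sp
    apply Subtype.ext
    funext c'
    simp

/-! #### Swapping two adjacent parts -/

lemma getD_swap_left (l₁ l₂ : List ℕ) (x y : ℕ) :
    (l₁ ++ x :: y :: l₂).getD l₁.length 0 = x := by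
  rw [List.getD_append_right _ _ _ _ (le_refl _)]
  simp

lemma getD_swap_right (l₁ l₂ : List ℕ) (x y : ℕ) :
    (l₁ ++ x :: y :: l₂).getD (l₁.length + 1) 0 = y := by
  rw [List.getD_append_right _ _ _ _ (by omega)]
  have h : l₁.length + 1 - l₁.length = 1 := by omega
  rw [h]
  rfl

lemma getD_swap_ne (l₁ l₂ : List ℕ) (x y k : ℕ) (h1 : k ≠ l₁.length)
    (h2 : k ≠ l₁.length + 1) :
    (l₁ ++ x :: y :: l₂).getD k 0 = (l₁ ++ y :: x :: l₂).getD k 0 := by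
  rcases Nat.lt_or_ge k l₁.length with h | h
  · rw [List.getD_append _ _ _ _ h, List.getD_append _ _ _ _ h]
  · obtain ⟨m, rfl⟩ : ∃ m, k = l₁.length + (m + 2) := ⟨k - l₁.length - 2, by omega⟩
    rw [List.getD_append_right _ _ _ _ (by omega), List.getD_append_right _ _ _ _ (by omega)]
    have h3 : l₁.length + (m + 2) - l₁.length = m + 2 := by omega
    rw [h3]
    rfl

lemma hasType_bk_swapA {T : Cell mu → Colour} (hs : mu.Pairwise (· ≥ ·))
    (hgs : GS isC T) (l₁ l₂ β : List ℕ) (x y : ℕ)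
    (hT : HasType (l₁ ++ x :: y :: l₂) β T) :
    HasType (l₁ ++ y :: x :: l₂) β
      (bk mu (cCol l₁.length) (cCol (l₁.length + 1)) T) := by
  have H : Ctx mu isC (cCol l₁.length) (cCol (l₁.length + 1)) T :=
    ⟨rlen_anti hs, hgs, cCol_lt_cCol_iff.2 (Nat.lt_succ_self _), adj_c _, ⟨_, rfl⟩, ⟨_, rfl⟩⟩
  obtain ⟨hTc, hTd⟩ := hT
  constructor
  · intro k
    by_cases hk1 : k = l₁.length
    · subst hk1
      rw [bk_count_a H, hTc (l₁.length + 1), getD_swap_right, getD_swap_left]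
    · by_cases hk2 : k = l₁.length + 1
      · subst hk2
        rw [bk_count_b H, hTc l₁.length, getD_swap_left, getD_swap_right]
      · rw [bk_count_ne H (fun h => hk1 (cCol_inj h)) (fun h => hk2 (cCol_inj h)),
          hTc k, getD_swap_ne l₁ l₂ x y k hk1 hk2]
  · intro k
    rw [bk_count_ne H (Ne.symm (cCol_ne_dCol _ _)) (Ne.symm (cCol_ne_dCol _ _)), hTd k]

lemma hasType_bk_swapB {T : Cell mu → Colour} (hs : mu.Pairwise (· ≥ ·))
    (hgs : GS (fun z => ¬ isC z) T) (α l₁ l₂ : List ℕ) (x y : ℕ)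
    (hT : HasType α (l₁ ++ x :: y :: l₂) T) :
    HasType α (l₁ ++ y :: x :: l₂)
      (bk mu (dCol l₁.length) (dCol (l₁.length + 1)) T) := by
  have H : Ctx mu (fun z => ¬ isC z) (dCol l₁.length) (dCol (l₁.length + 1)) T :=
    ⟨rlen_anti hs, hgs, dCol_lt_dCol_iff.2 (Nat.lt_succ_self _), adj_d _,
      (not_isC_iff _).2 ⟨_, rfl⟩, (not_isC_iff _).2 ⟨_, rfl⟩⟩
  obtain ⟨hTc, hTd⟩ := hT
  constructor
  · intro k
    rw [bk_count_ne H (cCol_ne_dCol _ _) (cCol_ne_dCol _ _), hTc k]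
  · intro k
    by_cases hk1 : k = l₁.length
    · subst hk1
      rw [bk_count_a H, hTd (l₁.length + 1), getD_swap_right, getD_swap_left]
    · by_cases hk2 : k = l₁.length + 1
      · subst hk2
        rw [bk_count_b H, hTd l₁.length, getD_swap_left, getD_swap_right]
      · rw [bk_count_ne H (fun h => hk1 (dCol_inj h)) (fun h => hk2 (dCol_inj h)),
          hTd k, getD_swap_ne l₁ l₂ x y k hk1 hk2]

lemma card_swap_alpha (mu : List ℕ) (hs : mu.Pairwise (· ≥ ·)) (l₁ l₂ β : List ℕ) (x y : ℕ) :
    Nat.card {T : Cell mu → Colour // HasType (l₁ ++ x :: y :: l₂) β T ∧ IsSemistd T} =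
      Nat.card {T : Cell mu → Colour // HasType (l₁ ++ y :: x :: l₂) β T ∧ IsSemistd T} := by
  apply Nat.card_congr
  have mkH : ∀ (T : Cell mu → Colour), IsSemistd T →
      Ctx mu isC (cCol l₁.length) (cCol (l₁.length + 1)) T := fun T hT =>
    ⟨rlen_anti hs, (sstd_iff_GS T).1 hT, cCol_lt_cCol_iff.2 (Nat.lt_succ_self _),
      adj_c _, ⟨_, rfl⟩, ⟨_, rfl⟩⟩
  refine ⟨fun Tp => ⟨bk mu (cCol l₁.length) (cCol (l₁.length + 1)) Tp.1, ?_, ?_⟩,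
      fun Tp => ⟨bk mu (cCol l₁.length) (cCol (l₁.length + 1)) Tp.1, ?_, ?_⟩, ?_, ?_⟩
  · exact hasType_bk_swapA hs ((sstd_iff_GS Tp.1).1 Tp.2.2) l₁ l₂ β x y Tp.2.1
  · exact (sstd_iff_GS _).2 (bk_GS (mkH Tp.1 Tp.2.2))
  · exact hasType_bk_swapA hs ((sstd_iff_GS Tp.1).1 Tp.2.2) l₁ l₂ β y x Tp.2.1
  · exact (sstd_iff_GS _).2 (bk_GS (mkH Tp.1 Tp.2.2))
  · intro Tp
    apply Subtype.ext
    exact bk_bk (mkH Tp.1 Tp.2.2)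
  · intro Tp
    apply Subtype.ext
    exact bk_bk (mkH Tp.1 Tp.2.2)

lemma card_swap_conjB (mu : List ℕ) (hs : mu.Pairwise (· ≥ ·)) (α l₁ l₂ : List ℕ) (x y : ℕ) :
    Nat.card {S : Cell mu → Colour // HasType α (l₁ ++ x :: y :: l₂) S ∧
        GS (fun z => ¬ isC z) S} =
      Nat.card {S : Cell mu → Colour // HasType α (l₁ ++ y :: x :: l₂) S ∧
        GS (fun z => ¬ isC z) S} := by
  apply Nat.card_congr
  have mkH : ∀ (T : Cell mu → Colour), GS (fun z => ¬ isC z) T →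
      Ctx mu (fun z => ¬ isC z) (dCol l₁.length) (dCol (l₁.length + 1)) T := fun T hT =>
    ⟨rlen_anti hs, hT, dCol_lt_dCol_iff.2 (Nat.lt_succ_self _), adj_d _,
      (not_isC_iff _).2 ⟨_, rfl⟩, (not_isC_iff _).2 ⟨_, rfl⟩⟩
  refine ⟨fun Tp => ⟨bk mu (dCol l₁.length) (dCol (l₁.length + 1)) Tp.1, ?_, ?_⟩,
      fun Tp => ⟨bk mu (dCol l₁.length) (dCol (l₁.length + 1)) Tp.1, ?_, ?_⟩, ?_, ?_⟩
  · exact hasType_bk_swapB hs Tp.2.2 α l₁ l₂ x y Tp.2.1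
  · exact bk_GS (mkH Tp.1 Tp.2.2)
  · exact hasType_bk_swapB hs Tp.2.2 α l₁ l₂ y x Tp.2.1
  · exact bk_GS (mkH Tp.1 Tp.2.2)
  · intro Tp
    apply Subtype.ext
    exact bk_bk (mkH Tp.1 Tp.2.2)
  · intro Tp
    apply Subtype.ext
    exact bk_bk (mkH Tp.1 Tp.2.2)

lemma card_swap_beta (mu : List ℕ) (hs : mu.Pairwise (· ≥ ·)) (α l₁ l₂ : List ℕ) (x y : ℕ) :
    Nat.card {T : Cell mu → Colour // HasType α (l₁ ++ x :: y :: l₂) T ∧ IsSemistd T} =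
      Nat.card {T : Cell mu → Colour // HasType α (l₁ ++ y :: x :: l₂) T ∧ IsSemistd T} := by
  rw [card_conj_side hs, card_conj_side hs]
  exact card_swap_conjB (conjP mu) (conjP_sorted hs) α l₁ l₂ x y

/-! #### From adjacent swaps to arbitrary rearrangements -/

def AdjSw (L1 L2 : List ℕ) : Prop :=
  ∃ l₁ x y l₂, L1 = l₁ ++ x :: y :: l₂ ∧ L2 = l₁ ++ y :: x :: l₂

lemma perm_rtg {L1 L2 : List ℕ} (h : L1.Perm L2) :
    Relation.ReflTransGen AdjSw L1 L2 := by
  induction h with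
  | nil => exact Relation.ReflTransGen.refl
  | cons z h ih =>
    refine Relation.ReflTransGen.lift (List.cons z) ?_ _ _ ih
    rintro p q ⟨l₁, x, y, l₂, rfl, rfl⟩
    exact (⟨z :: l₁, x, y, l₂, rfl, rfl⟩ : AdjSw _ _)
  | swap u v l =>
    exact Relation.ReflTransGen.single ⟨[], v, u, l, rfl, rfl⟩
  | trans h1 h2 ih1 ih2 => exact ih1.trans ih2

lemma card_perm_alpha (mu : List ℕ) (hs : mu.Pairwise (· ≥ ·)) (β : List ℕ)
    {A A' : List ℕ} (h : A.Perm A') :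
    Nat.card {T : Cell mu → Colour // HasType A β T ∧ IsSemistd T} =
      Nat.card {T : Cell mu → Colour // HasType A' β T ∧ IsSemistd T} := by
  have hr := perm_rtg h
  clear h
  induction hr with
  | refl => rfl
  | tail hstep hlast ih =>
    rw [ih]
    obtain ⟨l₁, x, y, l₂, rfl, rfl⟩ := hlast
    exact card_swap_alpha mu hs l₁ l₂ β x y

lemma card_perm_beta (mu : List ℕ) (hs : mu.Pairwise (· ≥ ·)) (α : List ℕ)
    {B B' : List ℕ} (h : B.Perm B') :
    Nat.card {T : Cell mu → Colour // HasType α B T ∧ IsSemistd T} =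
      Nat.card {T : Cell mu → Colour // HasType α B' T ∧ IsSemistd T} := by
  have hr := perm_rtg h
  clear h
  induction hr with
  | refl => rfl
  | tail hstep hlast ih =>
    rw [ih]
    obtain ⟨l₁, x, y, l₂, rfl, rfl⟩ := hlast
    exact card_swap_beta mu hs α l₁ l₂ x y

end Aux

/-- **Rearrangement invariance.** If `α̃` and `β̃` are obtained by rearranging the parts
of `α` and `β` respectively, then `|sstd(λ, (α̃|β̃))| = |sstd(λ, (α|β))|`. -/
theorem card_sstd_rearrangement (n : ℕ) (lam : List ℕ) (hl : IsPartition n lam)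
    (α β α' β' : List ℕ) (hab : IsBicomp n α β)
    (hα : List.Perm α' α) (hβ : List.Perm β' β) :
    Nat.card {T : Cell lam → Colour // HasType α' β' T ∧ IsSemistd T} =
      Nat.card {T : Cell lam → Colour // HasType α β T ∧ IsSemistd T} := by
  have hs := hl.1
  have h1 := card_perm_alpha lam hs β' hα
  have h2 := card_perm_beta lam hs α hβ
  rw [h1, h2]

end SignedYoung
end

section
/- Let $\mathfrak{d} \in \mathscr{R}$. Then there is a well-defined map $\pi_{\mathfrak{d}} \colon R_{\t_0}\,\mathfrak{d}\,\mathrm{Sym}_{\alpha|\beta} \to \mathrm{Sym}_\beta$ satisfying $\pi_{\mathfrak{d}}(\tau\,\mathfrak{d}\,\xi_\alpha\,\xi_\beta^{+|\alpha|}) = \xi_\beta$ for all $\tau \in R_{\t_0}$ and $(\xi_\alpha,\xi_\beta) \in \mathrm{Sym}_\alpha \times \mathrm{Sym}_\beta$; i.e., the $\beta$-component of any factorization of an element of the double coset $R_{\t_0}\,\mathfrak{d}\,\mathrm{Sym}_{\alpha|\beta}$ is uniquely determined. -/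
namespace SignedYoung
open Equiv Finset
open scoped Classical

/-- **Well-definedness of the projection `π_𝔡`.** For `𝔡 ∈ ℛ`, the `β`-component of any
factorization `τ 𝔡 ξ_α ξ_β^{+|α|}` of an element of the double coset `R_{t0} 𝔡 Sym_{α|β}`
is uniquely determined. -/
theorem beta_component_well_defined (n : ℕ) (lam : List ℕ) (hl : IsPartition n lam)
    (α β : List ℕ) (hab : IsBicomp n α β) (t0 : Tab n lam) (𝔡 : Sym n)
    (h𝔡 : 𝔡 ∈ RSet t0 α β) :
    ∀ τ ∈ rowStab t0, ∀ τ' ∈ rowStab t0,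
    ∀ ξa ∈ symA n α β, ∀ ξa' ∈ symA n α β,
    ∀ ξb ∈ symB n α β, ∀ ξb' ∈ symB n α β,
      τ * 𝔡 * (ξa * ξb) = τ' * 𝔡 * (ξa' * ξb') → ξb = ξb' := by
  intro τ hτ τ' hτ' ξa hξa ξa' hξa' ξb hξb ξb' hξb' heq
  -- τ'⁻¹ * τ is in the row stabilizer
  have hσ : τ'⁻¹ * τ ∈ rowStab t0 := by
    intro a
    have h1 := hτ' ((τ'⁻¹ * τ) a)
    simp only [Equiv.Perm.mul_apply, show τ' (τ'⁻¹ (τ a)) = τ a from τ'.apply_symm_apply _] at h1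
    rw [Equiv.Perm.mul_apply, ← h1, hτ a]
  have eq1 : τ * 𝔡 = τ' * 𝔡 * (ξa' * ξb') * (ξa * ξb)⁻¹ := by
    rw [← heq]; group
  have hkey : 𝔡⁻¹ * (τ'⁻¹ * τ) * 𝔡 = ξa' * ξb' * ξb⁻¹ * ξa⁻¹ := by
    rw [show 𝔡⁻¹ * (τ'⁻¹ * τ) * 𝔡 = 𝔡⁻¹ * τ'⁻¹ * (τ * 𝔡) by group, eq1]; group
  have hyoung : 𝔡⁻¹ * (τ'⁻¹ * τ) * 𝔡 ∈ youngSubgroup n (α ++ β) := by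
    rw [hkey]
    exact mul_mem (mul_mem (mul_mem hξa'.1 hξb'.1) (inv_mem hξb.1)) (inv_mem hξa.1)
  have hA := h𝔡 (τ'⁻¹ * τ) hσ hyoung
  -- fixed-point helpers
  have fix_inv : ∀ (σ : Sym n) (i : Fin n), σ i = i → σ⁻¹ i = i := by
    intro σ i h
    exact Equiv.Perm.inv_eq_iff_eq.mpr h.symm
  have map_ge : ∀ (σ : Sym n), (∀ i : Fin n, (i : ℕ) < α.sum → σ i = i) →
      ∀ i : Fin n, α.sum ≤ (i : ℕ) → α.sum ≤ ((σ i : Fin n) : ℕ) := by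
    intro σ hfix i hi
    by_contra hc
    push_neg at hc
    have h2 := hfix (σ i) hc
    have h3 := σ.injective h2
    rw [h3] at hc
    exact absurd hc (not_lt.mpr hi)
  -- key pointwise identity: ξb' (ξb⁻¹ i) = i for all i
  have hpt : ∀ i : Fin n, ξb' (ξb⁻¹ i) = i := by
    intro i
    by_cases hi : α.sum ≤ (i : ℕ)
    · have h5 := hA.2 i hi
      rw [hkey] at h5
      simp only [Equiv.Perm.mul_apply] at h5
      rw [fix_inv ξa i (hξa.2 i hi)] at h5
      have hj : α.sum ≤ ((ξb⁻¹ i : Fin n) : ℕ) := by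
        have : α.sum ≤ ((ξb⁻¹ (ξb (ξb⁻¹ i)) : Fin n) : ℕ) := by
          rw [show ξb⁻¹ (ξb (ξb⁻¹ i)) = ξb⁻¹ i from ξb.symm_apply_apply _]
          exact map_ge ξb⁻¹ (fun j hj => fix_inv ξb j (hξb.2 j hj)) i hi
        simpa using this
      have hj' : α.sum ≤ ((ξb' (ξb⁻¹ i) : Fin n) : ℕ) :=
        map_ge ξb' (fun j hj => hξb'.2 j hj) _ hj
      rw [hξa'.2 _ hj'] at h5
      exact h5
    · push_neg at hi
      rw [fix_inv ξb i (hξb.2 i hi)]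
      exact hξb'.2 i hi
  -- conclude ξb = ξb'
  apply Equiv.ext
  intro x
  have := hpt (ξb x)
  rw [show ξb⁻¹ (ξb x) = x from ξb.symm_apply_apply x] at this
  exact this.symm

end SignedYoung
end

section
/- Let $d, \mathfrak{d} \in \mathrm{Sym}_n$ with $\mathfrak{d} \in \mathscr{R}$. If $C_{\t_0}\, d\, \mathrm{Sym}_{\alpha|\beta} \cap R_{\t_0}\,\mathfrak{d}\,\mathrm{Sym}_{\alpha|\beta} = \varnothing$, or if $d \notin \mathscr{C}$, then the integer coefficient $\mathfrak{a}_{d,\mathfrak{d}} = \sum_{\sigma \in C_{\t_0},\ \sigma d \in R_{\t_0}\mathfrak{d}\mathrm{Sym}_{\alpha|\beta}} \mathrm{sgn}(\sigma)\,\varepsilon_{\mathfrak{d}}(\sigma d)$ is zero. -/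
namespace SignedYoung
open Equiv Finset
open scoped Classical

section Aux

lemma mem_young_iff {n : ℕ} {γ : List ℕ} {σ : Sym n} :
    σ ∈ youngSubgroup n γ ↔ ∀ i : Fin n, blockOf γ (σ i) = blockOf γ i := Iff.rfl

lemma sum_take_le_sum (l : List ℕ) (m : ℕ) : (l.take m).sum ≤ l.sum := by
  conv_rhs => rw [← List.take_append_drop m l]
  rw [List.sum_append]
  exact Nat.le_add_right _ _

lemma sum_take_mono (l : List ℕ) {m k : ℕ} (h : m ≤ k) :
    (l.take m).sum ≤ (l.take k).sum := by
  have : l.take m = (l.take k).take m := by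
    rw [List.take_take, min_eq_left h]
  rw [this]
  exact sum_take_le_sum _ _

lemma blockOf_lt_of_lt {α β : List ℕ} {i : ℕ} (h : i < α.sum) :
    blockOf (α ++ β) i < α.length := by
  have hpos : 0 < α.length := by
    rcases α with _ | ⟨a, α⟩
    · simp at h
    · simp
  unfold blockOf
  rw [List.length_append, List.range_add, List.countP_append]
  have hsumtake : ((α ++ β).take α.length).sum = α.sum := by
    rw [List.take_left]
  have h2 : List.countP (fun j => decide (((α ++ β).take (j + 1)).sum ≤ i))
      ((List.range β.length).map (α.length + ·)) = 0 := by
    rw [List.countP_eq_zero]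
    intro j hj
    simp only [List.mem_map] at hj
    obtain ⟨k, _, rfl⟩ := hj
    simp only [decide_eq_true_eq]
    intro hle
    have : α.sum ≤ ((α ++ β).take (α.length + k + 1)).sum := by
      rw [← hsumtake]
      exact sum_take_mono _ (by omega)
    omega
  rw [h2, Nat.add_zero]
  have hle : List.countP (fun j => decide (((α ++ β).take (j + 1)).sum ≤ i))
      (List.range α.length) ≤ α.length := by
    have := List.countP_le_length
      (p := fun j => decide (((α ++ β).take (j + 1)).sum ≤ i)) (l := List.range α.length)
    simpa using this
  rcases Nat.lt_or_ge (List.countP (fun j => decide (((α ++ β).take (j + 1)).sum ≤ i))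
      (List.range α.length)) α.length with hlt | hge
  · exact hlt
  · exfalso
    have heq : List.countP (fun j => decide (((α ++ β).take (j + 1)).sum ≤ i))
        (List.range α.length) = (List.range α.length).length := by
      simp only [List.length_range]
      omega
    have hall := List.countP_eq_length.mp heq
    have := hall (α.length - 1) (by simp; omega)
    simp only [decide_eq_true_eq] at this
    rw [Nat.sub_add_cancel hpos, hsumtake] at this
    omega

lemma le_blockOf_of_le {α β : List ℕ} {i : ℕ} (h : α.sum ≤ i) :
    α.length ≤ blockOf (α ++ β) i := by
  unfold blockOf
  rw [List.length_append, List.range_add, List.countP_append]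
  have hsumtake : ((α ++ β).take α.length).sum = α.sum := by
    rw [List.take_left]
  have h1 : List.countP (fun j => decide (((α ++ β).take (j + 1)).sum ≤ i))
      (List.range α.length) = α.length := by
    have : List.countP (fun j => decide (((α ++ β).take (j + 1)).sum ≤ i))
        (List.range α.length) = (List.range α.length).length := by
      rw [List.countP_eq_length]
      intro j hj
      simp only [List.mem_range] at hj
      simp only [decide_eq_true_eq]
      calc ((α ++ β).take (j + 1)).sum ≤ ((α ++ β).take α.length).sum :=
            sum_take_mono _ (by omega)
        _ = α.sum := hsumtake
        _ ≤ i := h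
    simpa using this
  omega

lemma blockOf_lt_iff {α β : List ℕ} {i : ℕ} :
    blockOf (α ++ β) i < α.length ↔ i < α.sum := by
  constructor
  · intro hb
    by_contra hge
    have := le_blockOf_of_le (α := α) (β := β) (i := i) (by omega)
    omega
  · exact blockOf_lt_of_lt

lemma young_lt_iff {n : ℕ} {α β : List ℕ} {ξ : Sym n}
    (hξ : ξ ∈ youngSubgroup n (α ++ β)) (i : Fin n) :
    ((ξ i : Fin n) : ℕ) < α.sum ↔ (i : ℕ) < α.sum := by
  have hb := hξ i
  rw [← blockOf_lt_iff (β := β), ← blockOf_lt_iff (β := β), hb]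

lemma symA_mem_young {n : ℕ} {α β : List ℕ} {a : Sym n} (ha : a ∈ symA n α β) :
    a ∈ youngSubgroup n (α ++ β) := ha.1

lemma symB_mem_young {n : ℕ} {α β : List ℕ} {a : Sym n} (ha : a ∈ symB n α β) :
    a ∈ youngSubgroup n (α ++ β) := ha.1

lemma symA_mul_mem {n : ℕ} {α β : List ℕ} {a b : Sym n}
    (ha : a ∈ symA n α β) (hb : b ∈ symA n α β) : a * b ∈ symA n α β := by
  refine ⟨mul_mem ha.1 hb.1, fun i hi => ?_⟩
  rw [Equiv.Perm.mul_apply, hb.2 i hi, ha.2 i hi]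

lemma symA_symB_comm {n : ℕ} {α β : List ℕ} {a b : Sym n}
    (ha : a ∈ symA n α β) (hb : b ∈ symB n α β) : a * b = b * a := by
  have hd : a.Disjoint b := by
    intro i
    by_cases hi : (i : ℕ) < α.sum
    · exact Or.inr (hb.2 i hi)
    · exact Or.inl (ha.2 i (by omega))
  exact hd.commute.eq

/-- Every element of the Young subgroup factors as an element of `Sym_α` times an element
of `Sym_β^{+|α|}`. -/
lemma young_decomp {n : ℕ} {α β : List ℕ} {ξ : Sym n}
    (hξ : ξ ∈ youngSubgroup n (α ++ β)) :
    ∃ ξa ∈ symA n α β, ∃ ξb ∈ symB n α β, ξ = ξa * ξb := by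
  classical
  set p : Fin n → Prop := fun i => (i : ℕ) < α.sum with hp
  have hpres : ∀ i, p i ↔ p (ξ i) := fun i => (young_lt_iff hξ i).symm
  have hpres' : ∀ i, ¬ p i ↔ ¬ p (ξ i) := fun i => not_congr (hpres i)
  let ξa : Sym n := Equiv.Perm.ofSubtype (ξ.subtypePerm (fun i => (hpres i).symm))
  let ξb : Sym n := Equiv.Perm.ofSubtype (ξ.subtypePerm (p := fun i => ¬ p i) (fun i => (hpres' i).symm))
  have hξa_apply : ∀ i, p i → ξa i = ξ i := by
    intro i hi
    simp only [ξa]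
    rw [Equiv.Perm.ofSubtype_apply_of_mem (ξ.subtypePerm (fun i => (hpres i).symm)) hi]
    rfl
  have hξa_fix : ∀ i, ¬ p i → ξa i = i := by
    intro i hi
    simp only [ξa]
    rw [Equiv.Perm.ofSubtype_apply_of_not_mem (ξ.subtypePerm (fun i => (hpres i).symm)) hi]
  have hξb_apply : ∀ i, ¬ p i → ξb i = ξ i := by
    intro i hi
    simp only [ξb]
    rw [Equiv.Perm.ofSubtype_apply_of_mem (ξ.subtypePerm (p := fun i => ¬ p i) (fun i => (hpres' i).symm)) hi]
    rfl
  have hξb_fix : ∀ i, p i → ξb i = i := by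
    intro i hi
    simp only [ξb]
    rw [Equiv.Perm.ofSubtype_apply_of_not_mem (ξ.subtypePerm (p := fun i => ¬ p i) (fun i => (hpres' i).symm)) (not_not_intro hi)]
  refine ⟨ξa, ⟨?_, ?_⟩, ξb, ⟨?_, ?_⟩, ?_⟩
  · intro i
    by_cases hi : p i
    · rw [hξa_apply i hi]; exact hξ i
    · rw [hξa_fix i hi]
  · intro i hi
    exact hξa_fix i (by simp only [hp]; omega)
  · intro i
    by_cases hi : p i
    · rw [hξb_fix i hi]
    · rw [hξb_apply i hi]; exact hξ i
  · intro i hi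
    exact hξb_fix i hi
  · ext i
    by_cases hi : p i
    · rw [Equiv.Perm.mul_apply, hξb_fix i hi, hξa_apply i hi]
    · rw [Equiv.Perm.mul_apply, hξb_apply i hi, hξa_fix _ ((hpres' i).mp hi)]

lemma dCoset_mul_young {n : ℕ} {lam : List ℕ} {t0 : Tab n lam} {α β : List ℕ}
    {x ω g : Sym n} (hω : ω ∈ dCoset t0 α β x) (hg : g ∈ youngSubgroup n (α ++ β)) :
    ω * g ∈ dCoset t0 α β x := by
  obtain ⟨τ, hτ, ξ, hξ, rfl⟩ := hω
  exact ⟨τ, hτ, ξ * g, mul_mem hξ hg, by rw [← mul_assoc]⟩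

lemma colStab_mul {n : ℕ} {lam : List ℕ} {t0 : Tab n lam} {σ τ : Sym n}
    (hσ : σ ∈ colStab t0) (hτ : τ ∈ colStab t0) : σ * τ ∈ colStab t0 := by
  intro a
  rw [Equiv.Perm.mul_apply, hσ (τ a), hτ a]

lemma eps_mul_symA {n : ℕ} {lam : List ℕ} {t0 : Tab n lam} {α β : List ℕ}
    {𝔡 : Sym n} {ε : Sym n → ℤ} (hε : IsEps t0 α β 𝔡 ε) {ω g : Sym n}
    (hω : ω ∈ dCoset t0 α β 𝔡) (hg : g ∈ symA n α β) : ε (ω * g) = ε ω := by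
  obtain ⟨τ, hτ, ξ, hξ, rfl⟩ := hω
  obtain ⟨ξa, hξa, ξb, hξb, rfl⟩ := young_decomp hξ
  have hc : g * ξb = ξb * g := symA_symB_comm hg hξb
  have key : τ * 𝔡 * (ξa * ξb) * g = τ * 𝔡 * (ξa * g * ξb) := by
    rw [mul_assoc (τ * 𝔡), mul_assoc ξa, mul_assoc ξa, ← hc, ← mul_assoc ξa]
  rw [key, hε τ hτ (ξa * g) (symA_mul_mem hξa hg) ξb hξb, hε τ hτ ξa hξa ξb hξb]

end Aux

/-- **Vanishing of `𝔞_{d,𝔡}` (Lemma 3.8(ii)).** If the double cosets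
`C_{t0} d Sym_{α|β}` and `R_{t0} 𝔡 Sym_{α|β}` are disjoint, or if `d ∉ 𝒞`, then
`𝔞_{d,𝔡} = 0`. -/
theorem coeffA_eq_zero (n : ℕ) (lam : List ℕ) (hl : IsPartition n lam)
    (α β : List ℕ) (hab : IsBicomp n α β) (t0 : Tab n lam)
    (d 𝔡 : Sym n) (h𝔡 : 𝔡 ∈ RSet t0 α β)
    (ε : Sym n → ℤ) (hε : IsEps t0 α β 𝔡 ε)
    (h : cCoset t0 α β d ∩ dCoset t0 α β 𝔡 = ∅ ∨ d ∉ CSet t0 α β) :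
    coeffA t0 α β ε d 𝔡 = 0 := by
  rcases h with hdisj | hC
  · -- disjoint double cosets: every summand vanishes
    unfold coeffA
    apply Finset.sum_eq_zero
    intro σ _
    rw [if_neg]
    rintro ⟨hσ, hσd⟩
    have hmem : σ * d ∈ cCoset t0 α β d :=
      ⟨σ, hσ, 1, one_mem _, by group⟩
    have : σ * d ∈ cCoset t0 α β d ∩ dCoset t0 α β 𝔡 := ⟨hmem, hσd⟩
    rw [hdisj] at this
    exact this
  · -- d ∉ 𝒞 : pair up the summands by a suitable transposition
    simp only [CSet, Set.mem_setOf_eq, not_forall] at hC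
    obtain ⟨σ₁, hσ₁, hgY, hgnB⟩ := hC
    set g : Sym n := d⁻¹ * σ₁ * d with hgdef
    have hgi : ∃ i : Fin n, (i : ℕ) < α.sum ∧ g i ≠ i := by
      by_contra hcon
      push_neg at hcon
      exact hgnB ⟨hgY, fun i hi => hcon i hi⟩
    obtain ⟨i, hi, hgi⟩ := hgi
    -- the two entries to swap
    set a : Fin n := d i with ha
    set b : Fin n := d (g i) with hb
    have hba : b = σ₁ a := by
      simp only [ha, hb, hgdef, Equiv.Perm.mul_apply, Equiv.Perm.inv_def, Equiv.apply_symm_apply]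
    have hab : a ≠ b := by
      intro hcontra
      exact hgi (d.injective hcontra.symm)
    set σ0 : Sym n := Equiv.swap a b with hσ0
    have hσ0c : σ0 ∈ colStab t0 := by
      intro x
      rcases eq_or_ne x a with rfl | hxa
      · rw [hσ0, Equiv.swap_apply_left, hba, hσ₁ a]
      rcases eq_or_ne x b with rfl | hxb
      · rw [hσ0, Equiv.swap_apply_right, hba, hσ₁ a]
      · rw [hσ0, Equiv.swap_apply_of_ne_of_ne hxa hxb]
    have hconj : d⁻¹ * σ0 * d = Equiv.swap i (g i) := by
      have := Equiv.swap_apply_apply d i (g i)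
      rw [ha, hb] at hσ0
      rw [hσ0, this]
      group
    have hgilt : ((g i : Fin n) : ℕ) < α.sum := (young_lt_iff hgY i).mpr hi
    have hg0A : Equiv.swap i (g i) ∈ symA n α β := by
      constructor
      · intro x
        rcases eq_or_ne x i with rfl | hxi
        · rw [Equiv.swap_apply_left]; exact hgY x
        rcases eq_or_ne x (g i) with rfl | hxgi
        · rw [Equiv.swap_apply_right]; exact (hgY i).symm
        · rw [Equiv.swap_apply_of_ne_of_ne hxi hxgi]
      · intro x hx
        have hxi : x ≠ i := by intro hc; subst hc; omega
        have hxgi : x ≠ g i := by intro hc; subst hc; omega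
        exact Equiv.swap_apply_of_ne_of_ne hxi hxgi
    have hswap_sd : ∀ σ : Sym n, σ * σ0 * d = σ * d * Equiv.swap i (g i) := by
      intro σ
      rw [← hconj]
      group
    have hsgn0 : (Equiv.Perm.sign σ0 : ℤ) = -1 := by
      rw [hσ0, Equiv.Perm.sign_swap hab]
      rfl
    -- the summand function
    set f : Sym n → ℤ := fun σ =>
      if σ ∈ colStab t0 ∧ σ * d ∈ dCoset t0 α β 𝔡
        then (Equiv.Perm.sign σ : ℤ) * ε (σ * d) else 0 with hf
    have hσ0σ0 : σ0 * σ0 = 1 := by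
      rw [hσ0, Equiv.swap_mul_self]
    have hiff : ∀ σ : Sym n,
        (σ * σ0 ∈ colStab t0 ∧ σ * σ0 * d ∈ dCoset t0 α β 𝔡) ↔
        (σ ∈ colStab t0 ∧ σ * d ∈ dCoset t0 α β 𝔡) := by
      intro σ
      constructor
      · rintro ⟨h1, h2⟩
        have hσeq : σ = σ * σ0 * σ0 := by
          rw [mul_assoc, hσ0σ0, mul_one]
        constructor
        · rw [hσeq]; exact colStab_mul h1 hσ0c
        · have : σ * σ0 * σ0 * d = σ * σ0 * d * Equiv.swap i (g i) := hswap_sd (σ * σ0)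
          rw [hσeq, this]
          exact dCoset_mul_young h2 hg0A.1
      · rintro ⟨h1, h2⟩
        refine ⟨colStab_mul h1 hσ0c, ?_⟩
        rw [hswap_sd σ]
        exact dCoset_mul_young h2 hg0A.1
    have hstep : ∀ σ : Sym n, f (σ * σ0) = - f σ := by
      intro σ
      by_cases hP : σ ∈ colStab t0 ∧ σ * d ∈ dCoset t0 α β 𝔡
      · rw [hf]
        simp only
        rw [if_pos ((hiff σ).mpr hP), if_pos hP]
        rw [hswap_sd σ, eps_mul_symA hε hP.2 hg0A]
        have : (Equiv.Perm.sign (σ * σ0) : ℤ) = - (Equiv.Perm.sign σ : ℤ) := by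
          rw [map_mul]
          push_cast
          rw [hsgn0]
          ring
        rw [this]
        ring
      · rw [hf]
        simp only
        rw [if_neg (fun hc => hP ((hiff σ).mp hc)), if_neg hP, neg_zero]
    have hsum : coeffA t0 α β ε d 𝔡 = ∑ σ : Sym n, f σ := rfl
    have hcomp : ∑ σ : Sym n, f (σ * σ0) = ∑ σ : Sym n, f σ := by
      exact Fintype.sum_equiv (Equiv.mulRight σ0) _ _ (fun σ => rfl)
    have hneg : ∑ σ : Sym n, f (σ * σ0) = - ∑ σ : Sym n, f σ := by
      rw [← Finset.sum_neg_distrib]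
      exact Finset.sum_congr rfl (fun σ _ => hstep σ)
    rw [hsum]
    have := hcomp.symm.trans hneg
    linarith

end SignedYoung
end
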